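/- arXiv:1410.1701 — 6 statements merged into one kernel-verified Lean document; each statement's English description precedes it below -/
import Mathlib

section
/- Let K be a compact symmetric subset of ℝ^d with convex hull K̂. Then for all n ≥ d, the n-fold Minkowski sum K̂^n equals the Minkowski sum K^{n-d} + K̂^d. -/
open Pointwise

/-- `minkowskiPow A n` is the `n`-fold Minkowski sum `A + A + ⋯ + A` (with `A^0 = {0}`). -/
def minkowskiPow {α : Type*} [AddMonoid α] (A : Set α) : ℕ → Set α
  | 0 => {0}
  | n + 1 => A + minkowskiPow A n

lemma mkP_convex {d : ℕ} {C : Set (EuclideanSpace ℝ (Fin d))} (hC : Convex ℝ C)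
    (hne : C.Nonempty) : ∀ n : ℕ, minkowskiPow C n = (n : ℝ) • C
  | 0 => by simp [minkowskiPow, Set.zero_smul_set hne, Set.singleton_zero]
  | n + 1 => by
      rw [minkowskiPow, mkP_convex hC hne n, Nat.cast_succ,
        hC.add_smul (Nat.cast_nonneg n) zero_le_one, one_smul]
      exact add_comm _ _

lemma key_sub (d : ℕ) (K : Set (EuclideanSpace ℝ (Fin d))) :
    ((d : ℝ) + 1) • convexHull ℝ K ⊆ K + (d : ℝ) • convexHull ℝ K := by
  classical
  rintro x ⟨y, hy, rfl⟩
  rw [convexHull_eq_union] at hy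
  simp only [Set.mem_iUnion] at hy
  obtain ⟨t, hts, hai, hyt⟩ := hy
  have hcard : (t.card : ℝ) ≤ (d : ℝ) + 1 := by
    have h1 := hai.card_le_finrank_succ
    rw [Fintype.card_coe] at h1
    have h2 : Module.finrank ℝ (vectorSpan ℝ (Set.range ((↑) : t → EuclideanSpace ℝ (Fin d))))
        ≤ d := by
      simpa [finrank_euclideanSpace_fin] using
        (vectorSpan ℝ (Set.range ((↑) : t → EuclideanSpace ℝ (Fin d)))).finrank_le
    exact_mod_cast h1.trans (by omega)
  rw [Finset.convexHull_eq] at hyt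
  obtain ⟨w, hw0, hw1, hwy⟩ := hyt
  have htne : t.Nonempty := by
    rcases Finset.eq_empty_or_nonempty t with h | h
    · rw [h] at hw1; simp at hw1
    · exact h
  have hd1 : (0:ℝ) < (d : ℝ) + 1 := by positivity
  obtain ⟨j, hjt, hj⟩ := Finset.exists_le_of_sum_le (f := fun _ => (1:ℝ)/((d:ℝ)+1)) (g := w)
    htne (by
      rw [Finset.sum_const, hw1, nsmul_eq_mul]
      rw [div_eq_mul_inv, ← mul_assoc, mul_one]
      calc (t.card : ℝ) * ((d:ℝ)+1)⁻¹ ≤ ((d:ℝ)+1) * ((d:ℝ)+1)⁻¹ := by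
            exact mul_le_mul_of_nonneg_right hcard (by positivity)
        _ = 1 := mul_inv_cancel₀ (by positivity))
  have hj1 : 1 ≤ ((d:ℝ)+1) * w j := by
    rw [div_le_iff₀ hd1] at hj
    linarith [hj]
  set c : EuclideanSpace ℝ (Fin d) → ℝ :=
    fun i => ((d:ℝ)+1) * w i - if i = j then 1 else 0 with hc
  have hc0 : ∀ i ∈ t, 0 ≤ c i := by
    intro i hi
    by_cases h : i = j
    · subst h; simpa [hc] using hj1
    · simp only [hc, h, if_false, sub_zero]
      exact mul_nonneg (by positivity) (hw0 i hi)
  have hcsum : ∑ i ∈ t, c i = d := by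
    simp only [hc, Finset.sum_sub_distrib, ← Finset.mul_sum, hw1, mul_one]
    rw [Finset.sum_ite_eq' t j (fun _ => (1:ℝ))]
    simp [hjt]
  have hy' : y = ∑ i ∈ t, w i • i := by
    rw [← hwy, Finset.centerMass_eq_of_sum_1 _ _ hw1]; rfl
  have hx : ((d:ℝ)+1) • y = j + ∑ i ∈ t, c i • i := by
    rw [hy', Finset.smul_sum]
    have h1 : ∀ i ∈ t, ((d:ℝ)+1) • w i • i = c i • i + (if i = j then i else 0) := by
      intro i _
      rw [smul_smul]
      have : ((d:ℝ)+1) * w i = c i + (if i = j then 1 else 0) := by simp [hc]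
      rw [this, add_smul, ite_smul, one_smul, zero_smul]
    rw [Finset.sum_congr rfl h1, Finset.sum_add_distrib,
      Finset.sum_ite_eq' t j (fun i => i), if_pos hjt, add_comm]
  have hrest : ∑ i ∈ t, c i • i ∈ (d : ℝ) • convexHull ℝ K := by
    rcases Nat.eq_zero_or_pos d with hd0 | hdpos
    · subst hd0
      have hall : ∀ i ∈ t, c i = 0 := by
        intro i hi
        have := (Finset.sum_eq_zero_iff_of_nonneg hc0).mp (by simpa using hcsum) i hi
        exact this
      have : ∑ i ∈ t, c i • i = 0 := Finset.sum_eq_zero fun i hi => by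
        rw [hall i hi, zero_smul]
      rw [this]
      have hKne : (convexHull ℝ K).Nonempty := ⟨j, subset_convexHull ℝ K (hts hjt)⟩
      rw [Nat.cast_zero, Set.zero_smul_set hKne]
      simp [Set.singleton_zero]
    · have hd : (d : ℝ) ≠ 0 := by positivity
      have hmem : t.centerMass c id ∈ convexHull ℝ K :=
        t.centerMass_mem_convexHull hc0 (by rw [hcsum]; positivity) fun i hi => hts hi
      have heq : (d : ℝ) • t.centerMass c id = ∑ i ∈ t, c i • i := by
        rw [Finset.centerMass, hcsum, smul_inv_smul₀ hd]; rfl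
      exact heq ▸ Set.smul_mem_smul_set hmem
  show ((d:ℝ)+1) • y ∈ K + (d : ℝ) • convexHull ℝ K
  rw [hx]
  exact Set.add_mem_add (hts hjt) hrest

lemma key_eq (d : ℕ) (K : Set (EuclideanSpace ℝ (Fin d))) :
    convexHull ℝ K + minkowskiPow (convexHull ℝ K) d
      = K + minkowskiPow (convexHull ℝ K) d := by
  rcases K.eq_empty_or_nonempty with rfl | hne
  · simp
  · have hCc : Convex ℝ (convexHull ℝ K) := convex_convexHull _ _
    have hCne : (convexHull ℝ K).Nonempty := hne.mono (subset_convexHull ℝ K)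
    apply Set.Subset.antisymm
    · rw [mkP_convex hCc hCne d]
      intro x hx
      have hx' : x ∈ ((d:ℝ)+1) • convexHull ℝ K := by
        rw [hCc.add_smul (Nat.cast_nonneg d) zero_le_one, one_smul, add_comm]
        exact hx
      exact key_sub d K hx'
    · exact Set.add_subset_add (subset_convexHull ℝ K) subset_rfl

/-- Let `K` be a compact symmetric subset of `ℝ^d` with convex hull `K̂`. Then for all
`n ≥ d`, the `n`-fold Minkowski sum `K̂^n` equals the Minkowski sum `K^{n-d} + K̂^d`. -/
theorem stmt0 (d : ℕ) (K : Set (EuclideanSpace ℝ (Fin d)))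
    (hK : IsCompact K) (hsym : K = -K) (n : ℕ) (hn : d ≤ n) :
    minkowskiPow (convexHull ℝ K) n =
      minkowskiPow K (n - d) + minkowskiPow (convexHull ℝ K) d := by
  obtain ⟨m, rfl⟩ : ∃ m, n = m + d := ⟨n - d, by omega⟩
  rw [Nat.add_sub_cancel]
  induction m with
  | zero =>
      simp only [Nat.zero_add, minkowskiPow]
      rw [Set.singleton_zero, zero_add]
  | succ m ih =>
      have h1 : m + 1 + d = (m + d) + 1 := by omega
      rw [h1]
      show convexHull ℝ K + minkowskiPow (convexHull ℝ K) (m + d) = _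
      rw [ih (by omega), ← add_assoc, add_comm (convexHull ℝ K) (minkowskiPow K m), add_assoc,
        key_eq d K, ← add_assoc, add_comm (minkowskiPow K m) K]
      rfl
end

section
/- Let K be a compact symmetric subset of ℝ^d with convex hull K̂. Then the Hausdorff distance between the n-fold Minkowski sum K^n and K̂^n is at most d times the Hausdorff distance between K and K̂, for all n ≥ d. -/
open Pointwise

section Aux

open Metric Set

variable {E : Type*} [NormedAddCommGroup E] [NormedSpace ℝ E]

lemma minkowskiPow_add {α : Type*} [AddMonoid α] (A : Set α) (m k : ℕ) :
    minkowskiPow A (m + k) = minkowskiPow A m + minkowskiPow A k := by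
  induction m with
  | zero => simp [minkowskiPow]
  | succ m ih =>
    have : m + 1 + k = (m + k) + 1 := by omega
    rw [this, minkowskiPow, ih, minkowskiPow, add_assoc]

lemma minkowskiPow_mono {α : Type*} [AddMonoid α] {A B : Set α} (h : A ⊆ B) (n : ℕ) :
    minkowskiPow A n ⊆ minkowskiPow B n := by
  induction n with
  | zero => simp [minkowskiPow]
  | succ n ih => exact Set.add_subset_add h ih

lemma nsmul_mem_minkowskiPow {α : Type*} [AddMonoid α] {A : Set α} {a : α} (ha : a ∈ A) :
    ∀ m : ℕ, m • a ∈ minkowskiPow A m := by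
  intro m
  induction m with
  | zero => simp [minkowskiPow]
  | succ m ih =>
    rw [succ_nsmul']
    exact Set.add_mem_add ha ih

lemma sum_nsmul_mem_minkowskiPow {α : Type*} [AddCommMonoid α] {A : Set α} {ι : Type*}
    (T : Finset ι) (g : ι → ℕ) (f : ι → α) (hf : ∀ i ∈ T, f i ∈ A) :
    ∑ i ∈ T, g i • f i ∈ minkowskiPow A (∑ i ∈ T, g i) := by
  classical
  induction T using Finset.induction_on with
  | empty => simp [minkowskiPow]
  | @insert a T ha ih =>
    rw [Finset.sum_insert ha, Finset.sum_insert ha, minkowskiPow_add]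
    exact Set.add_mem_add (nsmul_mem_minkowskiPow (hf _ (Finset.mem_insert_self _ _)) _)
      (ih fun i hi => hf _ (Finset.mem_insert_of_mem hi))

lemma minkowskiPow_of_convex {C : Set E} (hC : Convex ℝ C) :
    ∀ n : ℕ, 1 ≤ n → minkowskiPow C n = (n : ℝ) • C := by
  intro n hn
  induction n with
  | zero => omega
  | succ n ih =>
    rcases Nat.eq_or_lt_of_le hn with h | h
    · simp only [← h, Nat.cast_one, one_smul]
      show minkowskiPow C 1 = C
      simp [minkowskiPow, Set.add_singleton]
    · have hn1 : 1 ≤ n := by omega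
      rw [minkowskiPow, ih hn1]
      push_cast
      rw [add_comm (n : ℝ) 1, hC.add_smul zero_le_one (by positivity), one_smul]

lemma approx_minkowskiPow {K : Set E} (hKne : K.Nonempty) (hKc : IsCompact K)
    (hed : EMetric.hausdorffEdist K (convexHull ℝ K) ≠ ⊤) :
    ∀ s : ℕ, ∀ x ∈ minkowskiPow (convexHull ℝ K) s,
      ∃ z ∈ minkowskiPow K s, dist x z ≤ s * hausdorffDist K (convexHull ℝ K) := by
  intro s
  induction s with
  | zero =>
    intro x hx
    refine ⟨x, hx, ?_⟩
    simp
  | succ s ih =>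
    rintro x ⟨a, ha, y, hy, rfl⟩
    obtain ⟨z, hz, hzd⟩ := ih y hy
    obtain ⟨b, hb, hbd⟩ := hKc.exists_infDist_eq_dist hKne a
    have hinf : dist a b ≤ hausdorffDist K (convexHull ℝ K) := by
      rw [← hbd]
      calc infDist a K ≤ hausdorffDist (convexHull ℝ K) K :=
            infDist_le_hausdorffDist_of_mem ha (by rwa [EMetric.hausdorffEdist_comm])
        _ = hausdorffDist K (convexHull ℝ K) := hausdorffDist_comm ..
    refine ⟨b + z, Set.add_mem_add hb hz, ?_⟩
    calc dist (a + y) (b + z) ≤ dist a b + dist y z := dist_add_add_le _ _ _ _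
      _ ≤ hausdorffDist K (convexHull ℝ K) + s * hausdorffDist K (convexHull ℝ K) := by
          linarith
      _ = (s + 1 : ℕ) * hausdorffDist K (convexHull ℝ K) := by push_cast; ring

end Aux

/-- Let `K` be a compact symmetric subset of `ℝ^d` with convex hull `K̂`. Then the Hausdorff
distance between the `n`-fold Minkowski sums `K^n` and `K̂^n` is at most `d` times the
Hausdorff distance between `K` and `K̂`, for all `n ≥ d`. -/
theorem stmt1 (d : ℕ) (K : Set (EuclideanSpace ℝ (Fin d)))
    (hK : IsCompact K) (hsym : K = -K) (n : ℕ) (hn : d ≤ n) :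
    Metric.hausdorffDist (minkowskiPow K n) (minkowskiPow (convexHull ℝ K) n) ≤
      d * Metric.hausdorffDist K (convexHull ℝ K) := by
  classical
  set r := Metric.hausdorffDist K (convexHull ℝ K) with hr
  have hr0 : 0 ≤ r := Metric.hausdorffDist_nonneg
  rcases K.eq_empty_or_nonempty with hKe | hKne
  · subst hKe
    rw [convexHull_empty, Metric.hausdorffDist_self_zero]
    exact mul_nonneg (by positivity) Metric.hausdorffDist_nonneg
  rcases Nat.eq_zero_or_pos n with hn0 | hn1
  · subst hn0
    show Metric.hausdorffDist ({0} : Set (EuclideanSpace ℝ (Fin d))) {0} ≤ _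
    rw [Metric.hausdorffDist_self_zero]
    positivity
  have hCconv : Convex ℝ (convexHull ℝ K) := convex_convexHull ℝ K
  have hCne : (convexHull ℝ K).Nonempty := hKne.convexHull
  have hed : EMetric.hausdorffEdist K (convexHull ℝ K) ≠ ⊤ :=
    Metric.hausdorffEdist_ne_top_of_nonempty_of_bounded hKne hCne hK.isBounded
      (isBounded_convexHull.mpr hK.isBounded)
  apply Metric.hausdorffDist_le_of_infDist (by positivity)
  · intro x hx
    have : x ∈ minkowskiPow (convexHull ℝ K) n :=
      minkowskiPow_mono (subset_convexHull ℝ K) n hx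
    rw [Metric.infDist_zero_of_mem this]
    positivity
  · intro x hx
    -- x ∈ (conv K)^n = n • conv K
    rw [minkowskiPow_of_convex hCconv n hn1] at hx
    obtain ⟨y, hy, rfl⟩ := hx
    -- Carathéodory
    obtain ⟨ι, hι, z, w, hzK, hai, hw0, hw1, hwy⟩ :=
      eq_pos_convex_span_of_mem_convexHull hy
    have hcard : Fintype.card ι ≤ d + 1 := by
      have h1 : Fintype.card ι ≤ Module.finrank ℝ (vectorSpan ℝ (Set.range z)) + 1 :=
        hai.card_le_finrank_succ
      have h2 : Module.finrank ℝ (vectorSpan ℝ (Set.range z)) ≤ Module.finrank ℝ (EuclideanSpace ℝ (Fin d)) :=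
        Submodule.finrank_le _
      have h3 : Module.finrank ℝ (EuclideanSpace ℝ (Fin d)) = d := finrank_euclideanSpace_fin
      omega
    set μ : ι → ℝ := fun i => n * w i with hμ
    have hμ0 : ∀ i, 0 ≤ μ i := fun i => by
      have := (hw0 i).le; positivity
    set m : ι → ℕ := fun i => ⌊μ i⌋₊ with hm
    set θ : ι → ℝ := fun i => μ i - m i with hθ
    have hθ0 : ∀ i, 0 ≤ θ i := fun i => sub_nonneg.mpr (Nat.floor_le (hμ0 i))
    have hθ1 : ∀ i, θ i < 1 := fun i => by
      have := Nat.lt_floor_add_one (μ i)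
      simp only [hθ]; linarith
    have hsumμ : ∑ i, μ i = n := by
      simp only [hμ, ← Finset.mul_sum, hw1, mul_one]
    set M : ℕ := ∑ i, m i with hM
    have hMn : M ≤ n := by
      have : (M : ℝ) ≤ n := by
        rw [hM]
        push_cast
        calc ∑ i, (m i : ℝ) ≤ ∑ i, μ i := Finset.sum_le_sum fun i _ => Nat.floor_le (hμ0 i)
          _ = n := hsumμ
      exact_mod_cast this
    set s : ℕ := n - M with hs
    have hsθ : (s : ℝ) = ∑ i, θ i := by
      have : ∑ i, θ i = (∑ i, μ i) - (∑ i, (m i : ℝ)) := by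
        simp [hθ, Finset.sum_sub_distrib]
      have hMr : (M : ℝ) = ∑ i, (m i : ℝ) := by rw [hM]; push_cast; rfl
      have hsr : (s : ℝ) = (n : ℝ) - M := by rw [hs]; push_cast [hMn]; ring
      linarith
    have hιne : Nonempty ι := by
      by_contra h
      rw [not_nonempty_iff] at h
      simp [Finset.univ_eq_empty] at hw1
    have hsd : s ≤ d := by
      have hlt : (s : ℝ) < Fintype.card ι := by
        rw [hsθ]
        calc ∑ i, θ i < ∑ _i : ι, (1 : ℝ) :=
              Finset.sum_lt_sum_of_nonempty Finset.univ_nonempty fun i _ => hθ1 i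
          _ = Fintype.card ι := by simp
      have : s < Fintype.card ι := by exact_mod_cast hlt
      omega
    -- decomposition
    have hdecomp : (n : ℝ) • y = (∑ i, m i • z i) + ∑ i, θ i • z i := by
      rw [← hwy, Finset.smul_sum, ← Finset.sum_add_distrib]
      congr 1
      ext i
      rw [smul_smul, ← Nat.cast_smul_eq_nsmul ℝ (m i) (z i), ← add_smul]
      simp [hθ, hμ]
    have hu : (∑ i, m i • z i) ∈ minkowskiPow K M :=
      sum_nsmul_mem_minkowskiPow Finset.univ m z fun i _ => hzK ⟨i, rfl⟩
    have hrem : (∑ i, θ i • z i) ∈ minkowskiPow (convexHull ℝ K) s := by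
      rcases Nat.eq_zero_or_pos s with hs0 | hs1
      · have hzero : ∀ i ∈ Finset.univ, θ i • z i = 0 := by
          have hall : ∀ i ∈ Finset.univ, θ i = 0 := by
            rw [← Finset.sum_eq_zero_iff_of_nonneg fun i _ => hθ0 i]
            rw [← hsθ, hs0]; simp
          intro i hi; rw [hall i hi, zero_smul]
        rw [Finset.sum_congr rfl hzero, Finset.sum_const_zero]
        simp [hs0, minkowskiPow]
      · rw [minkowskiPow_of_convex hCconv s hs1]
        have hsne : (0 : ℝ) < s := by exact_mod_cast hs1
        refine ⟨∑ i, (θ i / s) • z i, ?_, ?_⟩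
        · apply hCconv.sum_mem (fun i _ => div_nonneg (hθ0 i) hsne.le)
          · rw [← Finset.sum_div, ← hsθ, div_self hsne.ne']
          · exact fun i _ => subset_convexHull ℝ K (hzK ⟨i, rfl⟩)
        · show (s : ℝ) • ∑ i, (θ i / s) • z i = ∑ i, θ i • z i
          rw [Finset.smul_sum]
          congr 1
          ext i
          rw [smul_smul, mul_div_cancel₀ _ hsne.ne']
    obtain ⟨zz, hzz, hzzd⟩ := approx_minkowskiPow hKne hK hed s _ hrem
    have hmem : (∑ i, m i • z i) + zz ∈ minkowskiPow K n := by
      have : M + s = n := by omega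
      rw [← this, minkowskiPow_add]
      exact Set.add_mem_add hu hzz
    calc Metric.infDist ((n : ℝ) • y) (minkowskiPow K n)
        ≤ dist ((n : ℝ) • y) ((∑ i, m i • z i) + zz) := Metric.infDist_le_dist_of_mem hmem
      _ = dist (∑ i, θ i • z i) zz := by rw [hdecomp, dist_add_left]
      _ ≤ s * r := hzzd
      _ ≤ d * r := by
          apply mul_le_mul_of_nonneg_right _ hr0
          exact_mod_cast hsd
end

section
/- Let δ be a translation-invariant metric on ℤ^d that is bi-Lipschitz equivalent to a norm ‖·‖ on ℝ^d with error bound: there exist C > 0, α > 0 and an increasing unbounded function φ : ℝ_+ → [1,∞) with φ(r)/r → 0, φ doubling (φ(λr) ≤ η(λ)φ(r)), such that (1 − C/φ(‖x−y‖))‖x−y‖ ≤ δ(x,y) ≤ (1 + C/φ(‖x−y‖))‖x−y‖ whenever δ(x,y) ≥ α. Then there exist constants C' > 0 and α_0 > 0 such that for every m ≥ 1 and x, y ∈ ℤ^d with δ(x,y)/m ≥ α_0, there exist points x = x_0, x_1, ..., x_m = y in ℤ^d with (1 − C'/φ(α))·δ(x,y)/m ≤ δ(x_i, x_{i+1}) ≤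 (1 + C'/φ(α))·δ(x,y)/m for all i, where α = δ(x,y)/m. -/
open Filter



private lemma nrm_sum_le {d : ℕ} (nrm : (Fin d → ℝ) → ℝ)
    (h0 : nrm 0 = 0) (hadd : ∀ v w, nrm (v + w) ≤ nrm v + nrm w)
    (s : Finset (Fin d)) (f : Fin d → (Fin d → ℝ)) :
    nrm (∑ j ∈ s, f j) ≤ ∑ j ∈ s, nrm (f j) := by
  classical
  induction s using Finset.induction_on with
  | empty => simp [h0]
  | insert _ _ h ih =>
    rw [Finset.sum_insert h, Finset.sum_insert h]
    exact le_trans (hadd _ _) (by linarith)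

private lemma nrm_cube {d : ℕ} (nrm : (Fin d → ℝ) → ℝ)
    (h0 : nrm 0 = 0) (hadd : ∀ v w, nrm (v + w) ≤ nrm v + nrm w)
    (hsmul : ∀ (a : ℝ) v, nrm (a • v) = |a| * nrm v) :
    ∃ K > (0:ℝ), ∀ (b : ℝ), 0 ≤ b → ∀ v : Fin d → ℝ, (∀ j, |v j| ≤ b) → nrm v ≤ b * K := by
  classical
  have hnonneg : ∀ v, 0 ≤ nrm v := by
    intro v
    have h1 : nrm (-v) = nrm v := by
      have := hsmul (-1) v; simpa using this
    have h2 := hadd v (-v)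
    simp [h0, h1] at h2
    linarith
  set eb : Fin d → (Fin d → ℝ) := fun j i => if i = j then 1 else 0 with heb
  have hKpos : (0:ℝ) < (∑ j, nrm (eb j)) + 1 := by
    have : (0:ℝ) ≤ ∑ j, nrm (eb j) := Finset.sum_nonneg fun j _ => hnonneg _
    linarith
  refine ⟨(∑ j, nrm (eb j)) + 1, hKpos, ?_⟩
  · intro b hb v hv
    have hrepr : v = ∑ j, (v j) • eb j := by
      funext i
      simp [Finset.sum_apply, eb]
    have h1 : nrm v ≤ ∑ j, nrm ((v j) • eb j) := by
      calc nrm v = nrm (∑ j, (v j) • eb j) := by rw [← hrepr]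
        _ ≤ ∑ j, nrm ((v j) • eb j) := nrm_sum_le nrm h0 hadd _ _
    have h2 : ∀ j : Fin d, nrm ((v j) • eb j) ≤ b * nrm (eb j) := by
      intro j
      rw [hsmul]
      exact mul_le_mul_of_nonneg_right (hv j) (hnonneg _)
    calc nrm v ≤ ∑ j, nrm ((v j) • eb j) := h1
      _ ≤ ∑ j, b * nrm (eb j) := Finset.sum_le_sum fun j _ => h2 j
      _ = b * ∑ j, nrm (eb j) := by rw [Finset.mul_sum]
      _ ≤ b * ((∑ j, nrm (eb j)) + 1) := by nlinarith
private lemma ediv_real_bound (a b : ℤ) (hb : 0 < b) :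
    |((a / b : ℤ) : ℝ) - (a:ℝ)/(b:ℝ)| ≤ 1 := by
  have h := Int.mul_ediv_add_emod a b
  have h1 : (0:ℤ) ≤ a % b := Int.emod_nonneg a hb.ne'
  have h2 : a % b < b := Int.emod_lt_of_pos a hb
  have hbR : (0:ℝ) < (b:ℝ) := by exact_mod_cast hb
  have hcast : (b:ℝ) * ((a / b : ℤ):ℝ) + ((a % b : ℤ):ℝ) = (a:ℝ) := by exact_mod_cast congrArg (Int.cast : ℤ → ℝ) h
  have h1R : (0:ℝ) ≤ ((a % b : ℤ):ℝ) := by exact_mod_cast h1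
  have h2R : ((a % b : ℤ):ℝ) < (b:ℝ) := by exact_mod_cast h2
  rw [abs_le]
  have key : ((a / b : ℤ):ℝ) = (a:ℝ)/(b:ℝ) - ((a % b : ℤ):ℝ)/(b:ℝ) := by
    field_simp
    linarith [hcast]
  rw [key]
  constructor
  · have : ((a % b : ℤ):ℝ)/(b:ℝ) < 1 := by rw [div_lt_one hbR]; exact h2R
    linarith
  · have : (0:ℝ) ≤ ((a % b : ℤ):ℝ)/(b:ℝ) := div_nonneg h1R hbR.le
    linarith
set_option maxHeartbeats 2000000 in
/-- Let `δ` be a translation-invariant metric on `ℤ^d` comparable to a norm `‖·‖` on `ℝ^d`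
with error bound controlled by an increasing unbounded sublinear doubling function
`φ : ℝ₊ → [1,∞)`: namely `(1 − C/φ(‖x−y‖))‖x−y‖ ≤ δ(x,y) ≤ (1 + C/φ(‖x−y‖))‖x−y‖` whenever
`δ(x,y) ≥ α`. Then there exist `C' > 0` and `α₀ > 0` such that for every `m ≥ 1` and
`x, y ∈ ℤ^d` with `δ(x,y)/m ≥ α₀`, there are points `x = x₀, x₁, …, x_m = y` in `ℤ^d` with
`(1 − C'/φ(α))·δ(x,y)/m ≤ δ(x_i, x_{i+1}) ≤ (1 + C'/φ(α))·δ(x,y)/m` for all `i`, where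
`α = δ(x,y)/m`. -/
theorem stmt9 (d : ℕ)
    (δ : (Fin d → ℤ) → (Fin d → ℤ) → ℝ)
    (hδ0 : ∀ x y, δ x y = 0 ↔ x = y)
    (hδsymm : ∀ x y, δ x y = δ y x)
    (hδtri : ∀ x y z, δ x z ≤ δ x y + δ y z)
    (hinv : ∀ x y z, δ (x + z) (y + z) = δ x y)
    (nrm : (Fin d → ℝ) → ℝ)
    (hnrm0 : ∀ v, nrm v = 0 ↔ v = 0)
    (hnrmadd : ∀ v w, nrm (v + w) ≤ nrm v + nrm w)
    (hnrmsmul : ∀ (a : ℝ) (v), nrm (a • v) = |a| * nrm v)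
    (C α : ℝ) (hC : 0 < C) (hα : 0 < α)
    (φ : ℝ → ℝ) (hφmono : MonotoneOn φ (Set.Ici 0))
    (hφ1 : ∀ r : ℝ, 0 ≤ r → 1 ≤ φ r)
    (hφunb : Tendsto φ atTop atTop)
    (hφsub : Tendsto (fun r => φ r / r) atTop (nhds 0))
    (η : ℝ → ℝ)
    (hηsub : Tendsto (fun lam => η lam / lam) atTop (nhds 0))
    (hφdbl : ∀ lam > (0 : ℝ), ∀ r > (0 : ℝ), φ (lam * r) ≤ η lam * φ r)
    (hcomp : ∀ x y : Fin d → ℤ, α ≤ δ x y →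
      (1 - C / φ (nrm (fun i => (x i : ℝ) - (y i : ℝ)))) *
          nrm (fun i => (x i : ℝ) - (y i : ℝ)) ≤ δ x y ∧
      δ x y ≤ (1 + C / φ (nrm (fun i => (x i : ℝ) - (y i : ℝ)))) *
          nrm (fun i => (x i : ℝ) - (y i : ℝ))) :
    ∃ C' > (0 : ℝ), ∃ α0 > (0 : ℝ), ∀ m : ℕ, 1 ≤ m → ∀ x y : Fin d → ℤ,
      α0 ≤ δ x y / m →
        ∃ z : ℕ → (Fin d → ℤ), z 0 = x ∧ z m = y ∧
          ∀ i < m,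
            (1 - C' / φ (δ x y / m)) * (δ x y / m) ≤ δ (z i) (z (i + 1)) ∧
            δ (z i) (z (i + 1)) ≤ (1 + C' / φ (δ x y / m)) * (δ x y / m) := by
  classical
  -- basic norm facts
  have nzero : nrm 0 = 0 := (hnrm0 0).mpr rfl
  have nneg : ∀ v, nrm (-v) = nrm v := by
    intro v; have := hnrmsmul (-1) v; simpa using this
  have nnonneg : ∀ v, 0 ≤ nrm v := by
    intro v
    have h2 := hnrmadd v (-v)
    simp [nzero, nneg] at h2
    linarith
  have ntri' : ∀ a b : Fin d → ℝ, nrm a - nrm b ≤ nrm (a - b) := by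
    intro a b
    have := hnrmadd (a - b) b
    simp at this
    linarith
  obtain ⟨K, hK, hcube⟩ := nrm_cube nrm nzero hnrmadd hnrmsmul
  -- thresholds
  obtain ⟨T, hT⟩ : ∃ T, ∀ r ≥ T, 2*C ≤ φ r :=
    eventually_atTop.mp (hφunb.eventually_ge_atTop (2*C))
  set β0 : ℝ := max T (4*α+1) with hβ0def
  have hβ0pos : 0 < β0 := lt_of_lt_of_le (by linarith) (le_max_right _ _)
  set E : ℝ := η (2*(1+C)) with hEdef
  have hE : 0 < E := by
    have h1 := hφdbl (2*(1+C)) (by linarith) 1 one_pos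
    have h2 : (1:ℝ) ≤ φ (2*(1+C) * 1) := hφ1 _ (by positivity)
    have h3 : (1:ℝ) ≤ φ 1 := hφ1 1 zero_le_one
    nlinarith only [h1, h2, h3]
  set M : ℝ := 4*C*E + 4*K + 2 with hMdef
  obtain ⟨T₂, hT₂⟩ : ∃ T₂, ∀ r ≥ T₂, M ≤ φ r :=
    eventually_atTop.mp (hφunb.eventually_ge_atTop M)
  obtain ⟨T₃, hT₃⟩ : ∃ T₃, ∀ r ≥ T₃, φ r / r < 1 :=
    eventually_atTop.mp (hφsub.eventually_lt_const one_pos)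
  set C' : ℝ := 5*C*E + 4*K + 1 with hC'def
  have hC'pos : 0 < C' := by positivity
  set α0 : ℝ := max (max (2*α) (2*β0)) (max T₂ (max T₃ 1)) with hα0def
  have hα0pos : 0 < α0 :=
    lt_of_lt_of_le (by linarith) (le_trans (le_max_left _ _) (le_max_left _ _))
  refine ⟨C', hC'pos, α0, hα0pos, ?_⟩
  intro m hm x y hxy
  set a : ℝ := δ x y / m with hadef
  have hm' : (0:ℝ) < m := by exact_mod_cast hm
  have hm1 : (1:ℝ) ≤ m := by exact_mod_cast hm
  have hmZ : (0:ℤ) < (m:ℤ) := by exact_mod_cast hm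
  have ha0 : 0 < a := lt_of_lt_of_le hα0pos hxy
  have hD : δ x y = m * a := by rw [hadef]; field_simp
  have haD : a ≤ δ x y := by nlinarith only [hD, hm1, ha0]
  have hα0a : α0 ≤ a := hxy
  have h2α : 2*α ≤ a :=
    le_trans (le_trans (le_max_left _ _) (le_max_left _ _)) hα0a
  have h2β0 : 2*β0 ≤ a :=
    le_trans (le_trans (le_max_right _ _) (le_max_left _ _)) hα0a
  have hD2α : 2*α ≤ δ x y := le_trans h2α haD
  set P : ℝ := φ a with hPdef
  have hP1 : (1:ℝ) ≤ P := hφ1 a ha0.le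
  have hPpos : (0:ℝ) < P := by linarith
  have hPM : M ≤ P :=
    hT₂ a (le_trans (le_trans (le_max_left _ _) (le_max_right _ _)) hα0a)
  have ha1 : (1:ℝ) ≤ a :=
    le_trans (le_trans (le_trans (le_max_right _ _) (le_max_right _ _)) (le_max_right _ _)) hα0a
  have hPa : P ≤ a := by
    have h1 : φ a / a < 1 :=
      hT₃ a (le_trans (le_trans (le_trans (le_max_left _ _) (le_max_right _ _)) (le_max_right _ _)) hα0a)
    rw [div_lt_one ha0] at h1
    linarith only [h1, hPdef]
  -- ratio lemma
  have hratio : ∀ r, a / (2*(1+C)) ≤ r → P ≤ E * φ r := by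
    intro r hr
    have h1 : φ (2*(1+C) * (a/(2*(1+C)))) ≤ E * φ (a/(2*(1+C))) :=
      hφdbl _ (by linarith) _ (by positivity)
    rw [show 2*(1+C) * (a/(2*(1+C))) = a by field_simp] at h1
    have hr0 : (0:ℝ) ≤ a/(2*(1+C)) := by positivity
    have h2 : φ (a/(2*(1+C))) ≤ φ r := hφmono hr0 (le_trans hr0 hr) hr
    nlinarith only [h1, h2, hE, hPdef]
  -- L3 : large norm implies δ ≥ α
  have L3 : ∀ w : Fin d → ℤ, β0 ≤ nrm (fun j => (w j : ℝ)) → α ≤ δ 0 w := by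
    intro w hw
    set u : Fin d → ℝ := fun j => (w j : ℝ) with hudef
    set n : ℝ := nrm u with hndef
    have hnpos : 0 < n := lt_of_lt_of_le hβ0pos hw
    by_contra hs
    push_neg at hs
    set W : ℕ → (Fin d → ℤ) := fun k j => (k:ℤ) * w j with hWdef
    have hWnrm : ∀ k : ℕ, nrm (fun j => ((W k j : ℤ):ℝ)) = k * n := by
      intro k
      have h1 : (fun j => ((W k j : ℤ):ℝ)) = (k:ℝ) • u := by
        funext j
        simp only [hWdef, hudef, Pi.smul_apply, smul_eq_mul]
        push_cast
        ring
      rw [h1, hnrmsmul, hndef, abs_of_nonneg (Nat.cast_nonneg k)]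
    have hstep : ∀ k : ℕ, δ (W k) (W (k+1)) = δ 0 w := by
      intro k
      have h1 : w + W k = W (k+1) := by
        funext j; simp [hWdef]; push_cast; ring
      have h2 := hinv 0 w (W k)
      rw [zero_add, h1] at h2
      exact h2
    by_cases hex : ∃ k : ℕ, α ≤ δ 0 (W (k+1))
    · -- minimal counterexample
      set k₀ := Nat.find hex with hk₀def
      have hk₀ := Nat.find_spec hex
      rw [← hk₀def] at hk₀
      rcases Nat.eq_zero_or_pos k₀ with h0 | h1
      · rw [h0] at hk₀
        have : W 1 = w := by funext j; simp [hWdef]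
        rw [this] at hk₀
        linarith only [hk₀, hs]
      · have hprev : ¬ (α ≤ δ 0 (W (k₀ - 1 + 1))) := Nat.find_min hex (by omega)
        rw [Nat.sub_add_cancel h1] at hprev
        push_neg at hprev
        have htr : δ 0 (W (k₀+1)) ≤ δ 0 (W k₀) + δ 0 w := by
          have := hδtri 0 (W k₀) (W (k₀+1))
          rw [hstep k₀] at this
          exact this
        have hlt : δ 0 (W (k₀+1)) < 2*α := by linarith only [htr, hprev, hs]
        obtain ⟨hl, _⟩ := hcomp 0 (W (k₀+1)) hk₀
        have harg : (fun i => (((0:Fin d → ℤ) i : ℤ):ℝ) - ((W (k₀+1) i : ℤ):ℝ))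
            = -(fun j => ((W (k₀+1) j : ℤ):ℝ)) := by
          funext j; simp
        rw [harg, nneg, hWnrm] at hl
        have hkn : n ≤ ((k₀+1 : ℕ):ℝ) * n := by
          have : (1:ℝ) ≤ ((k₀+1:ℕ):ℝ) := by exact_mod_cast Nat.one_le_iff_ne_zero.mpr (by omega)
          nlinarith only [this, hnpos]
        have hφbig : 2*C ≤ φ (((k₀+1:ℕ):ℝ) * n) := by
          apply hT
          have hTβ : T ≤ β0 := le_max_left _ _
          linarith only [hTβ, hw, hkn]
        have hφpos : 0 < φ (((k₀+1:ℕ):ℝ) * n) := by linarith only [hφbig, hC]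
        have hhalf : C / φ (((k₀+1:ℕ):ℝ) * n) ≤ 1/2 := by
          rw [div_le_iff₀ hφpos]; linarith only [hφbig]
        have hβ4α : 4*α + 1 ≤ β0 := le_max_right _ _
        have hX0 : (0:ℝ) ≤ ((k₀+1:ℕ):ℝ) * n := le_trans hnpos.le hkn
        have hp := mul_le_mul_of_nonneg_right hhalf hX0
        linarith only [hl, hlt, hp, hkn, hw, hβ4α, hnpos, hα]
    · push_neg at hex
      -- δ 0 (W k) < α for all k ≥ 1; derive contradiction with far pair
      set xy : Fin d → ℝ := fun i => (x i : ℝ) - (y i : ℝ) with hxydef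
      obtain ⟨k, hk⟩ := exists_nat_ge ((max T (2*(δ x y + α)+1) + nrm xy) / n)
      set Y : Fin d → ℤ := y + W (k+1) with hYdef
      have hδyY : δ y Y = δ 0 (W (k+1)) := by
        have h2 := hinv 0 (W (k+1)) y
        rw [zero_add] at h2
        rw [hYdef, add_comm y (W (k+1))]
        exact h2
      have hδyY' : δ y Y < α := by rw [hδyY]; exact hex k
      have hup : δ x Y ≤ δ x y + α := le_trans (hδtri x y Y) (by linarith only [hδyY'])
      have hge : α ≤ δ x Y := by
        have h1 := hδtri x Y y
        rw [hδsymm Y y] at h1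
        linarith only [h1, hδyY', hD2α]
      obtain ⟨hl, _⟩ := hcomp x Y hge
      set Mk : ℝ := nrm (fun i => (x i : ℝ) - (Y i : ℝ)) with hMkdef
      have hMk : ((k+1:ℕ):ℝ) * n - nrm xy ≤ Mk := by
        have h1 := ntri' (fun j => ((W (k+1) j : ℤ):ℝ)) xy
        rw [hWnrm] at h1
        have h2 : (fun j => ((W (k+1) j : ℤ):ℝ)) - xy
            = -(fun i => (x i : ℝ) - (Y i : ℝ)) := by
          funext j; simp [hxydef, hYdef, hWdef]; push_cast; ring
        rw [h2, nneg] at h1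
        rw [hMkdef]; linarith only [h1]
      have hkn : max T (2*(δ x y + α)+1) + nrm xy ≤ (k:ℝ) * n := by
        rw [div_le_iff₀ hnpos] at hk
        linarith only [hk]
      have hkk : (k:ℝ) * n ≤ ((k+1:ℕ):ℝ) * n := by
        push_cast; linarith only [hnpos]
    
      have hMkT : max T (2*(δ x y + α)+1) ≤ Mk := by
        have h9 := nnonneg xy
        linarith only [hMk, hkn, hkk, h9]
      have hφMk : 2*C ≤ φ Mk := hT Mk (le_trans (le_max_left _ _) hMkT)
      have hφMkpos : 0 < φ Mk := by linarith only [hφMk, hC]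
      have hhalf : C / φ Mk ≤ 1/2 := by rw [div_le_iff₀ hφMkpos]; linarith only [hφMk]
      have hbig : 2*(δ x y + α)+1 ≤ Mk := le_trans (le_max_right _ _) hMkT
      have hMknn : 0 ≤ Mk := by rw [hMkdef]; exact nnonneg _
      have hp := mul_le_mul_of_nonneg_right hhalf hMknn
      linarith only [hl, hup, hp, hbig, hD2α, hα]
  -- compare δ x y with N
  have hxyα : α ≤ δ x y := by linarith only [hD2α, hα]
  obtain ⟨hN1, hN2⟩ := hcomp x y hxyα
  set N : ℝ := nrm (fun i => (x i : ℝ) - (y i : ℝ)) with hNdef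
  have hNnonneg : 0 ≤ N := nnonneg _
  have hφN1 : (1:ℝ) ≤ φ N := hφ1 N hNnonneg
  have hφNpos : (0:ℝ) < φ N := by linarith only [hφN1]
  have hCφN : C / φ N ≤ C := by
    rw [div_le_iff₀ hφNpos]; nlinarith only [hφN1, hC]
  have hNlow0 : m * a / (2*(1+C)) ≤ N := by
    have h1 : δ x y ≤ (1+C) * N := by nlinarith only [hN2, hCφN, hNnonneg]
    rw [div_le_iff₀ (by linarith only [hC] : (0:ℝ) < 2*(1+C))]
    nlinarith only [h1, hD, hNnonneg, hC]
  have hφNE : P ≤ E * φ N := by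
    apply hratio
    apply le_trans _ hNlow0
    have ham : a ≤ (m:ℝ)*a := by nlinarith only [hm1, ha0]
    rw [div_le_div_iff₀ (by linarith only [hC] : (0:ℝ) < 2*(1+C)) (by linarith only [hC] : (0:ℝ) < 2*(1+C))]
    nlinarith only [ham, hC]
  have hCNE : C / φ N ≤ C*E/P := by
    rw [div_le_div_iff₀ hφNpos hPpos]
    nlinarith only [hφNE, hC]
  have hCEP : C*E/P ≤ 1/2 := by
    rw [div_le_iff₀ hPpos]
    nlinarith only [hPM, hMdef, hK, hC, hE]
  have hCEPnn : 0 ≤ C*E/P := by positivity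
  have hNup : N ≤ m*a*(1 + 2*(C*E/P)) := by
    have h1 : (1 - C*E/P) * N ≤ m * a := by
      have hq := mul_le_mul_of_nonneg_right hCNE hNnonneg
      rw [hD] at hN1
      linarith only [hq, hN1]
    have h2 : N ≤ 2*(m*a) := by
      have hp := mul_le_mul_of_nonneg_right hCEP hNnonneg
      linarith only [h1, hp]
    have hp2 := mul_le_mul_of_nonneg_left h2 hCEPnn
    linarith only [h1, hp2]
  have hNlo : m*a*(1 - C*E/P) ≤ N := by
    have h1 : m*a ≤ (1 + C*E/P) * N := by
      rw [hD] at hN2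
      have hq := mul_le_mul_of_nonneg_right hCNE hNnonneg
      linarith only [hN2, hq]
    have hp := mul_le_mul_of_nonneg_right h1 (show (0:ℝ) ≤ 1 - C*E/P by linarith only [hCEP])
    have hs2 : (0:ℝ) ≤ (C*E/P)*(C*E/P)*N := by positivity
    linarith only [hp, hs2]
  -- the chain
  obtain ⟨z, hzval⟩ : ∃ z' : ℕ → Fin d → ℤ,
      ∀ i j, z' i j = x j + ((i:ℤ) * (y j - x j)) / (m:ℤ) :=
    ⟨fun i j => x j + ((i:ℤ) * (y j - x j)) / (m:ℤ), fun _ _ => rfl⟩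
  refine ⟨z, ?_, ?_, ?_⟩
  · funext j
    rw [hzval]
    simp
  · funext j
    rw [hzval, Int.mul_ediv_cancel_left _ hmZ.ne']
    ring
  · intro i hi
    obtain ⟨wv, hwv⟩ : ∃ w' : Fin d → ℤ, ∀ j, w' j = z (i+1) j - z i j :=
      ⟨_, fun _ => rfl⟩
    obtain ⟨u, hu⟩ : ∃ u' : Fin d → ℝ, ∀ j, u' j = (wv j : ℝ) := ⟨_, fun _ => rfl⟩
    obtain ⟨v, hv⟩ : ∃ v' : Fin d → ℝ, ∀ j, v' j = (y j : ℝ) - (x j : ℝ) :=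
      ⟨_, fun _ => rfl⟩
    set n : ℝ := nrm u with hndef
    have hnv : nrm v = N := by
      have h1 : v = -(fun i => (x i : ℝ) - (y i : ℝ)) := by
        funext j; rw [hv j]; simp
      rw [h1, nneg]
    have hcoord : ∀ j, |u j - v j / m| ≤ 2 := by
      intro j
      have h1 := ediv_real_bound ((i:ℤ) * (y j - x j)) (m:ℤ) hmZ
      have h2 := ediv_real_bound (((i:ℤ)+1) * (y j - x j)) (m:ℤ) hmZ
      have e1 : u j = ((((i:ℤ)+1) * (y j - x j) / (m:ℤ) : ℤ):ℝ)
          - (((i:ℤ) * (y j - x j) / (m:ℤ) : ℤ):ℝ) := by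
        rw [hu j, hwv j, hzval, hzval]
        push_cast
        ring
      have e2 : v j / (m:ℝ) = ((((i:ℤ)+1) * (y j - x j) : ℤ):ℝ)/((m:ℤ):ℝ)
          - (((i:ℤ) * (y j - x j) : ℤ):ℝ)/((m:ℤ):ℝ) := by
        rw [hv j]
        push_cast
        ring
      rw [e1, e2, abs_le]
      rw [abs_le] at h1 h2
      constructor
      · linarith only [h1.2, h2.1]
      · linarith only [h1.1, h2.2]
    have herr : nrm (u - (1/(m:ℝ)) • v) ≤ 2 * K := by
      apply hcube 2 (by norm_num)
      intro j
      have h3 := hcoord j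
      simp only [Pi.sub_apply, Pi.smul_apply, smul_eq_mul]
      rw [show u j - 1/(m:ℝ) * v j = u j - v j / m by ring]
      exact h3
    have hnum : nrm ((1/(m:ℝ)) • v) = N/m := by
      rw [hnrmsmul, hnv, abs_of_pos (by positivity : (0:ℝ) < 1/(m:ℝ))]
      ring
    have hn_up' : n ≤ N/m + 2*K := by
      have h1 := hnrmadd (u - (1/(m:ℝ)) • v) ((1/(m:ℝ)) • v)
      simp only [sub_add_cancel] at h1
      rw [hnum] at h1
      rw [hndef]; linarith only [h1, herr]
    have hn_lo' : N/m - 2*K ≤ n := by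
      have h1 := ntri' ((1/(m:ℝ)) • v) u
      have h2 : (1/(m:ℝ)) • v - u = -(u - (1/(m:ℝ)) • v) := (neg_sub _ _).symm
      rw [h2, nneg, hnum] at h1
      rw [hndef]; linarith only [h1, herr]
    have hNm_up : N/m ≤ a*(1 + 2*(C*E/P)) := by
      rw [div_le_iff₀ hm']
      linarith only [hNup]
    have hNm_lo : a*(1 - C*E/P) ≤ N/m := by
      rw [le_div_iff₀ hm']
      linarith only [hNlo]
    have h2K : 2*K ≤ 2*K*(a/P) := by
      have h5 : (1:ℝ) ≤ a/P := by rw [le_div_iff₀ hPpos]; linarith only [hPa]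
      nlinarith only [h5, hK]
    have hn_lo : a*(1 - (C*E + 2*K)/P) ≤ n := by
      have h6 : a*(1 - (C*E + 2*K)/P) = a*(1 - C*E/P) - 2*K*(a/P) := by
        field_simp; ring
      rw [h6]; linarith only [hNm_lo, hn_lo', h2K]
    have hn_up : n ≤ a*(1 + (2*(C*E) + 2*K)/P) := by
      have h6 : a*(1 + (2*(C*E) + 2*K)/P) = a*(1 + 2*(C*E/P)) + 2*K*(a/P) := by
        field_simp; ring
      rw [h6]; linarith only [hNm_up, hn_up', h2K]
    have hMP : (C*E + 2*K)/P ≤ 1/2 := by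
      rw [div_le_iff₀ hPpos]
      nlinarith only [hPM, hMdef, hC, hE, hK]
    have hn_half : a/2 ≤ n := by nlinarith only [hn_lo, hMP, ha0]
    have hβn : β0 ≤ n := by linarith only [hn_half, h2β0, hα0a]
    have hαstep : α ≤ δ 0 wv := by
      apply L3
      rw [show (fun j => ((wv j : ℤ):ℝ)) = u from funext fun j => (hu j).symm]
      exact hβn
    obtain ⟨hs1, hs2⟩ := hcomp 0 wv hαstep
    have harg : (fun i' => (((0:Fin d → ℤ) i' : ℤ):ℝ) - ((wv i' : ℤ):ℝ)) = -u := by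
      funext j; simp [hu j]
    rw [harg, nneg, ← hndef] at hs1 hs2
    have hδeq : δ (z i) (z (i+1)) = δ 0 wv := by
      have h1 := hinv 0 wv (z i)
      rw [zero_add] at h1
      have h2 : wv + z i = z (i+1) := by
        funext j
        simp only [Pi.add_apply, hwv j]
        ring
      rw [h2] at h1
      exact h1
    have hφnE : P ≤ E * φ n := by
      apply hratio
      apply le_trans _ hn_half
      rw [div_le_div_iff₀ (by linarith only [hC] : (0:ℝ) < 2*(1+C)) (by norm_num : (0:ℝ) < 2)]
      nlinarith only [ha0, hC]
    have hφn1 : (1:ℝ) ≤ φ n := hφ1 n (by linarith only [hn_half, ha0])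
    have hφnpos : (0:ℝ) < φ n := by linarith only [hφn1]
    have hCn : C / φ n ≤ C*E/P := by
      rw [div_le_div_iff₀ hφnpos hPpos]
      nlinarith only [hφnE, hC]
    have hCnnn : 0 ≤ C / φ n := by positivity
    have hnnn : 0 ≤ n := by linarith only [hn_half, ha0]
    have hCE : 0 < C*E := by positivity
    have ht0 : 0 ≤ (C*E + 2*K)/P := by positivity
    have ht'0 : 0 ≤ (2*(C*E) + 2*K)/P := by positivity
    constructor
    · -- lower bound
      rw [hδeq]
      have hfac : 0 ≤ 1 - C / φ n := by linarith only [hCn, hCEP]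
      have step1 : (1 - C*E/P) * (a*(1 - (C*E + 2*K)/P)) ≤ (1 - C / φ n) * n := by
        apply mul_le_mul (by linarith only [hCn]) hn_lo _ hfac
        nlinarith only [ha0, hMP]
      have hsum : C*E/P + (C*E + 2*K)/P ≤ C'/P := by
        rw [hC'def, ← add_div, div_le_div_iff₀ hPpos hPpos]
        nlinarith only [hPpos, hCE, hK]
      have step2 : (1 - C'/P) * a ≤ (1 - C*E/P) * (a*(1 - (C*E + 2*K)/P)) := by
        have hp := mul_le_mul_of_nonneg_left hsum ha0.le
        have hq : (0:ℝ) ≤ a*((C*E/P)*((C*E + 2*K)/P)) := by positivity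
        linarith only [hp, hq]
      linarith only [step1, step2, hs1]
    · -- upper bound
      rw [hδeq]
      have step1 : (1 + C / φ n) * n ≤ (1 + C*E/P) * (a*(1 + (2*(C*E) + 2*K)/P)) := by
        apply mul_le_mul (by linarith only [hCn]) hn_up hnnn (by linarith only [hCEPnn])
      have hst : (C*E/P) * ((2*(C*E) + 2*K)/P) ≤ (2*(C*E) + 2*K)/P := by
        nlinarith only [hCEP, ht'0]
      have hsum : C*E/P + 2*((2*(C*E) + 2*K)/P) ≤ C'/P := by
        rw [hC'def]
        rw [show C*E/P + 2*((2*(C*E) + 2*K)/P) = (C*E + 2*(2*(C*E) + 2*K))/P by ring]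
        rw [div_le_div_iff₀ hPpos hPpos]
        linarith only [hPpos]
      have step2 : (1 + C*E/P) * (a*(1 + (2*(C*E) + 2*K)/P)) ≤ (1 + C'/P) * a := by
        have hp := mul_le_mul_of_nonneg_left hsum ha0.le
        have hq := mul_le_mul_of_nonneg_left hst ha0.le
        linarith only [hp, hq]
      linarith only [step1, step2, hs2]
end

section
/- Let (X, d) be a metric space and N : ℝ_+ → ℝ_+ an increasing unbounded function. Suppose X is SAG*(N): there is α_0 > 0 such that for all x, y with d(x,y) = r ≥ α_0 and all λ ∈ [0,1], there exists z with (λ − 1/N(r))·r ≤ d(x,z) ≤ (λ + 1/N(r))·r and (1 − λ − 1/N(r))·r ≤ d(z,y) ≤ (1 − λ + 1/N(r))·r. Then for all sufficiently large r, the ball B(x, (1 + 1/N(r))·r) is contained in the 6r/N(r)-neighborhood of B(x, r), for every x ∈ X. -/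
open Filter

/-- Let `(X, d)` be a metric space and `N : ℝ₊ → ℝ₊` increasing and unbounded. Suppose `X` is
SAG*(N): there is `α₀ > 0` such that for all `x, y` with `d(x,y) = r ≥ α₀` and all
`λ ∈ [0,1]`, there exists `z` with `(λ − 1/N(r))r ≤ d(x,z) ≤ (λ + 1/N(r))r` and
`(1 − λ − 1/N(r))r ≤ d(z,y) ≤ (1 − λ + 1/N(r))r`. Then for all sufficiently large `r`, the
ball `B(x, (1 + 1/N(r))r)` is contained in the `6r/N(r)`-neighborhood of `B(x, r)`, for every
`x ∈ X`. -/
theorem stmt10 {X : Type*} [MetricSpace X] (N : ℝ → ℝ)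
    (hmono : Monotone N) (hpos : ∀ r > (0 : ℝ), 0 < N r)
    (hunb : Tendsto N atTop atTop)
    (α0 : ℝ) (hα0 : 0 < α0)
    (hsag : ∀ x y : X, α0 ≤ dist x y → ∀ lam ∈ Set.Icc (0 : ℝ) 1,
      ∃ z : X,
        (lam - 1 / N (dist x y)) * dist x y ≤ dist x z ∧
        dist x z ≤ (lam + 1 / N (dist x y)) * dist x y ∧
        (1 - lam - 1 / N (dist x y)) * dist x y ≤ dist z y ∧
        dist z y ≤ (1 - lam + 1 / N (dist x y)) * dist x y) :
    ∃ r0 : ℝ, ∀ r : ℝ, r0 ≤ r → ∀ x : X,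
      Metric.closedBall x ((1 + 1 / N r) * r) ⊆
        Metric.cthickening (6 * r / N r) (Metric.closedBall x r) := by
  obtain ⟨M, hM⟩ := eventually_atTop.mp (hunb.eventually_ge_atTop 3)
  refine ⟨max M α0, fun r hr x y hy => ?_⟩
  have hrα : α0 ≤ r := le_trans (le_max_right _ _) hr
  have hNr : (3 : ℝ) ≤ N r := hM r (le_trans (le_max_left _ _) hr)
  have hr0 : 0 < r := lt_of_lt_of_le hα0 hrα
  have hNrpos : 0 < N r := by linarith
  have hy' : dist y x ≤ (1 + 1 / N r) * r := Metric.mem_closedBall.mp hy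
  rcases le_or_gt (dist y x) r with h | h
  · exact Metric.self_subset_cthickening _ (Metric.mem_closedBall.mpr h)
  · set s := dist x y with hs
    have hsyx : s = dist y x := dist_comm x y
    have hs1 : r < s := hsyx ▸ h
    have hs2 : s ≤ (1 + 1 / N r) * r := hsyx ▸ hy'
    have hspos : 0 < s := lt_trans hr0 hs1
    have hNs : N r ≤ N s := hmono hs1.le
    have hNspos : 0 < N s := lt_of_lt_of_le hNrpos hNs
    set lam : ℝ := r / s - 1 / N s with hlam
    have hrs34 : 3 / 4 ≤ r / s := by
      rw [div_le_div_iff₀ (by norm_num) hspos]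
      have h13 : 1 / N r ≤ 1 / 3 := by
        rw [div_le_div_iff₀ hNrpos (by norm_num)]; linarith
      nlinarith
    have hlam0 : 0 ≤ lam := by
      have : 1 / N s ≤ 1 / 3 := by
        rw [div_le_div_iff₀ hNspos (by norm_num)]; linarith
      simp only [hlam]; linarith
    have hlam1 : lam ≤ 1 := by
      have : r / s ≤ 1 := (div_le_one hspos).mpr hs1.le
      have : 0 < 1 / N s := by positivity
      simp only [hlam]; linarith
    obtain ⟨z, _, hz2, _, hz4⟩ := hsag x y (hrα.trans hs1.le) lam ⟨hlam0, hlam1⟩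
    have hzball : z ∈ Metric.closedBall x r := by
      rw [Metric.mem_closedBall, dist_comm]
      calc dist x z ≤ (lam + 1 / N s) * s := hz2
        _ = r := by rw [hlam]; field_simp; ring
    refine Metric.mem_cthickening_of_dist_le y z _ _ hzball ?_
    rw [dist_comm]
    have h13 : 1 / N r ≤ 1 / 3 := by
      rw [div_le_div_iff₀ hNrpos (by norm_num)]; linarith
    have hs43 : s ≤ 4 / 3 * r := by
      nlinarith [mul_le_mul_of_nonneg_right h13 hr0.le]
    calc dist z y ≤ (1 - lam + 1 / N s) * s := hz4
      _ = s - r + 2 * s / N s := by rw [hlam]; field_simp; ring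
      _ ≤ 6 * r / N r := by
          have hsr : s - r ≤ r / N r := by
            have : s ≤ r + r / N r := by
              calc s ≤ (1 + 1 / N r) * r := hs2
                _ = r + r / N r := by ring
            linarith
          have h2 : 2 * s / N s ≤ 2 * s / N r :=
            div_le_div_of_nonneg_left (by positivity) hNrpos hNs
          have h3 : 2 * s / N r ≤ 3 * r / N r := by
            rw [div_le_div_iff₀ hNrpos hNrpos]
            nlinarith
          have h5 : r / N r + 3 * r / N r ≤ 6 * r / N r := by
            rw [← add_div]
            gcongr <;> linarith
          linarith
end

section
/- Let X = (V,E) be a graph of degree at most q, and let ν be a probability distribution on [0,∞) for i.i.d. edge weights with ν({0}) < 1/q and finite mean. Then there exists a'' > 0 such that the average distance satisfies d̄(x,y) ≥ a''·d(x,y) for all x, y ∈ V. -/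
open MeasureTheory ProbabilityTheory Filter Topology

section Aux
variable {V : Type*} {Ω : Type*} [MeasurableSpace Ω]

lemma aux_meas_listsum (W : Ω → Sym2 V → ℝ) (hmeas : ∀ e, Measurable fun ω => W ω e)
    (l : List (Sym2 V)) : Measurable fun ω => (l.map (W ω)).sum := by
  induction l with
  | nil => simpa using measurable_const
  | cons a l ih =>
      simp only [List.map_cons, List.sum_cons]
      exact (hmeas a).add ih

lemma aux_int_listsum (μ : Measure Ω) (W : Ω → Sym2 V → ℝ) {P : Sym2 V → Prop}
    (hint : ∀ e, P e → Integrable (fun ω => W ω e) μ)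
    (l : List (Sym2 V)) (hl : ∀ e ∈ l, P e) :
    Integrable (fun ω => (l.map (W ω)).sum) μ := by
  induction l with
  | nil => simpa using integrable_const (0 : ℝ)
  | cons a l ih =>
      simp only [List.map_cons, List.sum_cons]
      exact (hint a (hl a (by simp))).add (ih fun e he => hl e (by simp [he]))

lemma aux_countable_walk [DecidableEq V] (G : SimpleGraph V) [G.LocallyFinite]
    (u v : V) : Countable (G.Walk u v) :=
  Countable.of_equiv _ (Equiv.sigmaFiberEquiv fun p : G.Walk u v => p.length)

lemma aux_card_walkLength [DecidableEq V] (G : SimpleGraph V) [G.LocallyFinite]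
    (q : ℕ) (hdeg : ∀ v, G.degree v ≤ q) :
    ∀ (n : ℕ) (u v : V), (G.finsetWalkLength n u v).card ≤ q ^ n := by
  intro n
  induction n with
  | zero =>
      intro u v
      rw [SimpleGraph.finsetWalkLength]
      split_ifs with h
      · subst h; simp
      · simp
  | succ n ih =>
      intro u v
      rw [SimpleGraph.finsetWalkLength]
      refine le_trans Finset.card_biUnion_le ?_
      have h1 : ∀ w : G.neighborSet u,
          ((G.finsetWalkLength n (w : V) v).map
            ⟨fun p => SimpleGraph.Walk.cons w.property p, fun _ _ => by intro h; cases h; rfl⟩).card ≤ q ^ n := by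
        intro w
        exact le_trans (le_of_eq (Finset.card_map _)) (ih _ v)
      refine le_trans (Finset.sum_le_sum (fun w _ => h1 w)) ?_
      rw [Finset.sum_const, Finset.card_univ, SimpleGraph.card_neighborSet_eq_degree,
        smul_eq_mul, pow_succ]
      rw [mul_comm (q ^ n) q]
      exact Nat.mul_le_mul_right _ (hdeg u)

lemma aux_finset_of_list {α : Type*} [DecidableEq α] {P : α → Prop} [DecidablePred P]
    (l : List α) (hl : ∀ e ∈ l, P e) (hnodup : l.Nodup) :
    ∃ s : Finset {x // P x}, s.card = l.length ∧
      ∀ f : α → ℝ, (∑ i ∈ s, f ↑i) = (l.map f).sum := by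
  refine ⟨l.toFinset.subtype P, ?_, ?_⟩
  · rw [Finset.card_subtype, Finset.filter_true_of_mem (fun e he => hl e (List.mem_toFinset.mp he)),
      List.toFinset_card_of_nodup hnodup]
  · intro f
    rw [Finset.sum_subtype_eq_sum_filter,
      Finset.filter_true_of_mem (fun e he => hl e (List.mem_toFinset.mp he)),
      List.sum_toFinset _ hnodup]

lemma aux_chernoff {Ω : Type*} [MeasurableSpace Ω] (μ : MeasureTheory.Measure Ω)
    [MeasureTheory.IsProbabilityMeasure μ]
    {ι : Type*} (X : ι → Ω → ℝ)
    (hindep : ProbabilityTheory.iIndepFun X μ)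
    (hmeasX : ∀ i, Measurable (X i))
    (hXnonneg : ∀ i ω, 0 ≤ X i ω)
    (t : ℝ) (ht : 0 ≤ t) (ρ : ℝ)
    (hρ : ∀ i, ProbabilityTheory.mgf (X i) μ (-t) = ρ)
    (s : Finset ι) (a : ℝ) :
    (μ {ω | ∑ i ∈ s, X i ω ≤ a}).toReal ≤ Real.exp (t * a) * ρ ^ s.card := by
  have hfun : (∑ i ∈ s, X i) = fun ω => ∑ i ∈ s, X i ω := by
    funext ω; simp
  have h1 : Measurable fun ω => ∑ i ∈ s, X i ω :=
    Finset.measurable_sum s (fun i _ => hmeasX i)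
  have h_int : MeasureTheory.Integrable (fun ω => Real.exp (-t * ∑ i ∈ s, X i ω)) μ := by
    refine (MeasureTheory.integrable_const (1:ℝ)).mono'
      ((h1.const_mul (-t)).exp.aestronglyMeasurable) ?_
    filter_upwards with ω
    rw [Real.norm_eq_abs, abs_of_pos (Real.exp_pos _), Real.exp_le_one_iff]
    exact mul_nonpos_of_nonpos_of_nonneg (neg_nonpos.mpr ht)
      (Finset.sum_nonneg fun i _ => hXnonneg i ω)
  have h := ProbabilityTheory.measure_le_le_exp_mul_mgf (μ := μ)
    (X := fun ω => ∑ i ∈ s, X i ω) a (neg_nonpos.mpr ht) h_int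
  have hmgf : ProbabilityTheory.mgf (fun ω => ∑ i ∈ s, X i ω) μ (-t) = ρ ^ s.card := by
    rw [← hfun, ProbabilityTheory.iIndepFun.mgf_sum hindep hmeasX s,
      Finset.prod_congr rfl (fun i _ => hρ i), Finset.prod_const]
  rw [hmgf, neg_neg] at h
  exact h

end Aux

/-- The weighted graph distance: the infimum, over all walks `p` from `x` to `y`, of the sum
of the weights of the edges of `p`. -/
noncomputable def wdist {V : Type*} (G : SimpleGraph V) (w : Sym2 V → ℝ) (x y : V) : ℝ :=
  ⨅ p : G.Walk x y, (p.edges.map w).sum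

set_option maxHeartbeats 4000000 in
/-- Let `X = (V,E)` be a (connected) graph of degree at most `q`, and let `ν` be a
probability distribution on `[0,∞)` for i.i.d. edge weights with `ν({0}) < 1/q` and finite
mean. Then there exists `a'' > 0` such that the average distance satisfies
`d̄(x,y) ≥ a''·d(x,y)` for all `x, y ∈ V`. -/
theorem stmt11 {V : Type*} (G : SimpleGraph V) (hconn : G.Connected) (q : ℕ) (hq : 1 ≤ q)
    (hfin : ∀ v, (G.neighborSet v).Finite)
    (hdeg : ∀ v, (G.neighborSet v).ncard ≤ q)
    {Ω : Type*} [MeasurableSpace Ω] (μ : Measure Ω) [IsProbabilityMeasure μ]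
    (W : Ω → Sym2 V → ℝ) (ν : Measure ℝ) [IsProbabilityMeasure ν]
    (hpos : ∀ ω e, 0 ≤ W ω e)
    (hmeas : ∀ e : Sym2 V, Measurable fun ω => W ω e)
    (hindep : iIndepFun
      (fun (e : G.edgeSet) ω => W ω (e : Sym2 V)) μ)
    (hlaw : ∀ e : G.edgeSet, Measure.map (fun ω => W ω (e : Sym2 V)) μ = ν)
    (hsupp : ν (Set.Iio 0) = 0)
    (hν0 : ν {0} < 1 / (q : ENNReal))
    (hmean : Integrable id ν) :
    ∃ a'' > (0 : ℝ), ∀ x y : V,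
      a'' * (G.dist x y : ℝ) ≤ ∫ ω, wdist G (W ω) x y ∂μ := by
  classical
  letI : G.LocallyFinite := fun v => (hfin v).fintype
  haveI hcw : ∀ u v : V, Countable (G.Walk u v) := fun u v => aux_countable_walk G u v
  have hq0 : (0:ℝ) < q := by exact_mod_cast Nat.lt_of_lt_of_le Nat.zero_lt_one hq
  have hdeg' : ∀ v, G.degree v ≤ q := by
    intro v
    calc G.degree v = (G.neighborSet v).toFinset.card := rfl
      _ = (G.neighborSet v).ncard := (Set.ncard_eq_toFinset_card' _).symm
      _ ≤ q := hdeg v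
  -- integrability of each edge weight
  have int_edge : ∀ e, e ∈ G.edgeSet → Integrable (fun ω => W ω e) μ := by
    intro e he
    have h1 : Integrable id (Measure.map (fun ω => W ω e) μ) := by
      rw [hlaw ⟨e, he⟩]; exact hmean
    rw [integrable_map_measure aestronglyMeasurable_id (hmeas e).aemeasurable] at h1
    simpa [Function.comp] using h1
  -- ν-a.e. nonneg
  have h0le : ∀ᵐ x ∂ν, 0 ≤ x := by
    rw [ae_iff]
    simp only [not_le]
    exact hsupp
  -- the Laplace transform and its limit
  set ρ : ℝ → ℝ := fun t => ∫ x, Real.exp (-(t * x)) ∂ν with hρdef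
  have hρ_nonneg : ∀ t, 0 ≤ ρ t := fun t => integral_nonneg fun x => (Real.exp_pos _).le
  set ν₀ : ℝ := (ν {0}).toReal with hν₀def
  have hν₀nonneg : 0 ≤ ν₀ := ENNReal.toReal_nonneg
  have hqtop : (1 / (q : ENNReal)) ≠ ⊤ := by
    simp [ENNReal.div_eq_top]
    omega
  have hν0' : ν₀ < 1 / q := by
    have h1 := ENNReal.toReal_lt_toReal (measure_ne_top ν _) hqtop |>.mpr hν0
    simpa [one_div, ENNReal.toReal_inv] using h1
  have hlim : Tendsto (fun n : ℕ => ρ n) atTop (𝓝 ν₀) := by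
    have hind : ∫ x, Set.indicator ({0} : Set ℝ) (fun _ => (1:ℝ)) x ∂ν = ν₀ := by
      rw [integral_indicator_const (1:ℝ) (measurableSet_singleton 0)]
      simp [hν₀def]
      rfl
    rw [← hind]
    apply tendsto_integral_of_dominated_convergence (fun _ => (1:ℝ))
    · intro n
      exact ((Real.continuous_exp.comp (continuous_const.mul continuous_id).neg).aestronglyMeasurable)
    · exact integrable_const 1
    · intro n
      filter_upwards [h0le] with x hx
      rw [Real.norm_eq_abs, abs_of_pos (Real.exp_pos _)]
      rw [Real.exp_le_one_iff]
      · exact neg_nonpos.mpr (mul_nonneg (Nat.cast_nonneg n) hx)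
    · filter_upwards [h0le] with x hx
      rcases eq_or_lt_of_le hx with h | h
      · simp only [← h, mul_zero, neg_zero, Real.exp_zero]
        simpa using tendsto_const_nhds
      · have hne : Set.indicator ({0} : Set ℝ) (fun _ => (1:ℝ)) x = 0 := by
          simp [Set.indicator_of_notMem, h.ne']
        rw [hne]
        have heq : ∀ n : ℕ, Real.exp (-((n:ℝ) * x)) = Real.exp (-x) ^ n := by
          intro n
          rw [← Real.exp_nat_mul]
          ring_nf
        have : Tendsto (fun n : ℕ => Real.exp (-x) ^ n) atTop (𝓝 0) :=
          tendsto_pow_atTop_nhds_zero_of_lt_one (Real.exp_pos _).le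
            (Real.exp_lt_one_iff.mpr (neg_neg_iff_pos.mpr h))
        exact Tendsto.congr (fun n => (heq n).symm) this
  -- choose t = N with ρ N < c
  set c : ℝ := (ν₀ + 1 / q) / 2 with hcdef
  have hc1 : ν₀ < c := by rw [hcdef]; linarith
  have hc2 : (q : ℝ) * c < 1 := by
    rw [hcdef]
    have : c < 1 / q := by rw [hcdef]; linarith
    calc (q:ℝ) * c < (q:ℝ) * (1/q) := by
          apply mul_lt_mul_of_pos_left _ hq0
          rw [hcdef]; linarith
      _ = 1 := by field_simp
  obtain ⟨N, hN⟩ := (hlim.eventually_lt_const hc1).exists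
  set t : ℝ := (N : ℝ) with htdef
  have ht0 : 0 ≤ t := Nat.cast_nonneg N
  set ρN : ℝ := ρ t with hρNdef
  have hρN0 : 0 ≤ ρN := hρ_nonneg t
  have hb1 : (q:ℝ) * ρN < 1 := by
    calc (q:ℝ) * ρN ≤ (q:ℝ) * c := by
          apply mul_le_mul_of_nonneg_left hN.le hq0.le
      _ < 1 := hc2
  -- choose ε > 0 with r < 1
  have hcont : Tendsto (fun e : ℝ => (q:ℝ) * (Real.exp (t * e) * ρN)) (𝓝[>] (0:ℝ))
      (𝓝 ((q:ℝ) * ρN)) := by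
    have hco : Continuous fun e : ℝ => (q:ℝ) * (Real.exp (t * e) * ρN) := by
      continuity
    have h := (hco.tendsto 0).mono_left (nhdsWithin_le_nhds (s := Set.Ioi (0:ℝ)))
    simpa using h
  obtain ⟨ε, hεr, hεpos⟩ :=
    ((hcont.eventually_lt_const hb1).and (eventually_mem_nhdsWithin (s := Set.Ioi (0:ℝ)))).exists
  rw [Set.mem_Ioi] at hεpos
  set r : ℝ := (q:ℝ) * (Real.exp (t * ε) * ρN) with hrdef
  have hr0 : 0 ≤ r := mul_nonneg hq0.le (mul_nonneg (Real.exp_pos _).le hρN0)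
  have hr1 : r < 1 := hεr
  -- choose D
  obtain ⟨D₀, hD₀⟩ := exists_pow_lt_of_lt_one (show (0:ℝ) < (1 - r)/2 by linarith) hr1
  set D : ℕ := max D₀ 1 with hDdef
  have hD1 : 1 ≤ D := le_max_right _ _
  have hDbound : r ^ D ≤ (1 - r) / 2 := by
    calc r ^ D ≤ r ^ D₀ := pow_le_pow_of_le_one hr0 hr1.le (le_max_left _ _)
      _ ≤ (1 - r)/2 := hD₀.le
  -- choose δ
  have hIic : ν (Set.Iic 0) = ν {0} := by
    apply le_antisymm
    · calc ν (Set.Iic 0) ≤ ν (Set.Iio 0 ∪ {0}) := by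
            apply measure_mono
            intro z hz
            rcases lt_or_eq_of_le (Set.mem_Iic.mp hz) with h | h
            · exact Or.inl h
            · exact Or.inr (by simp [h])
        _ ≤ ν (Set.Iio 0) + ν {0} := measure_union_le _ _
        _ = ν {0} := by rw [hsupp, zero_add]
    · exact measure_mono (by simp)
  have hInter : (⋂ n : ℕ, Set.Iio ((1:ℝ)/(n+1))) = Set.Iic 0 := by
    ext z
    simp only [Set.mem_iInter, Set.mem_Iio, Set.mem_Iic]
    constructor
    · intro h
      by_contra hz
      push_neg at hz
      obtain ⟨n, hn⟩ := exists_nat_one_div_lt hz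
      exact absurd (h n) (not_lt.mpr hn.le)
    · intro hz n
      exact lt_of_le_of_lt hz (by positivity)
  have hanti : Antitone fun n : ℕ => Set.Iio ((1:ℝ)/(n+1)) := by
    intro m n hmn z hz
    simp only [Set.mem_Iio] at hz ⊢
    refine lt_of_lt_of_le hz ?_
    apply one_div_le_one_div_of_le (by positivity)
    have : (m:ℝ) ≤ n := Nat.cast_le.mpr hmn
    linarith
  have htm := tendsto_measure_iInter_atTop (μ := ν)
    (fun n => measurableSet_Iio.nullMeasurableSet) hanti ⟨0, measure_ne_top ν _⟩
  rw [hInter, hIic] at htm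
  obtain ⟨n₀, hn₀⟩ := (htm.eventually_lt_const hν0).exists
  set δ : ℝ := (1:ℝ)/(n₀+1) with hδdef
  have hδpos : 0 < δ := by positivity
  have hνδ' : ν (Set.Iio δ) < 1 / (q:ENNReal) := hn₀
  set νδ : ℝ := (ν (Set.Iio δ)).toReal with hνδdef
  have hνδ : (q:ℝ) * νδ < 1 := by
    have h1 := ENNReal.toReal_lt_toReal (measure_ne_top ν _) hqtop |>.mpr hνδ'
    simp only [one_div, ENNReal.toReal_inv] at h1
    have h2 : νδ < ((q:ENNReal).toReal)⁻¹ := h1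
    have h3 : ((q:ENNReal).toReal) = (q:ℝ) := by simp
    rw [h3] at h2
    calc (q:ℝ) * νδ < (q:ℝ) * ((q:ℝ))⁻¹ := mul_lt_mul_of_pos_left h2 hq0
      _ = 1 := by field_simp
  have hνδ0 : 0 ≤ νδ := ENNReal.toReal_nonneg
  set κ : ℝ := 1 - (q:ℝ) * νδ with hκdef
  have hκpos : 0 < κ := by rw [hκdef]; linarith
  -- the constant
  refine ⟨min (ε/2) (δ * κ / D), lt_min (by positivity) (by positivity), ?_⟩
  set a'' : ℝ := min (ε/2) (δ * κ / D) with ha''def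
  intro x y
  -- basic wdist facts
  obtain ⟨p₀⟩ : Nonempty (G.Walk x y) := hconn.preconnected x y
  haveI : Nonempty (G.Walk x y) := ⟨p₀⟩
  have hsum_nonneg : ∀ (ω : Ω) (l : List (Sym2 V)), 0 ≤ (l.map (W ω)).sum := by
    intro ω l
    apply List.sum_nonneg
    intro a ha
    obtain ⟨e, _, rfl⟩ := List.mem_map.mp ha
    exact hpos ω e
  have hbdd : ∀ ω : Ω, BddBelow (Set.range fun p : G.Walk x y => (p.edges.map (W ω)).sum) := by
    intro ω
    refine ⟨0, ?_⟩
    rintro z ⟨p, rfl⟩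
    exact hsum_nonneg ω _
  have hwd_nonneg : ∀ ω, 0 ≤ wdist G (W ω) x y := by
    intro ω
    exact Real.iInf_nonneg fun p => hsum_nonneg ω _
  have hwd_le : ∀ (ω) (p : G.Walk x y), wdist G (W ω) x y ≤ (p.edges.map (W ω)).sum := by
    intro ω p
    exact ciInf_le (hbdd ω) p
  have hwd_meas : Measurable fun ω => wdist G (W ω) x y := by
    simp only [wdist]
    exact Measurable.iInf fun p => aux_meas_listsum W hmeas p.edges
  have hwd_int : Integrable (fun ω => wdist G (W ω) x y) μ := by
    refine (aux_int_listsum μ W int_edge p₀.edges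
      (fun e he => p₀.edges_subset_edgeSet he)).mono' hwd_meas.aestronglyMeasurable ?_
    filter_upwards with ω
    rw [Real.norm_eq_abs, abs_of_nonneg (hwd_nonneg ω)]
    exact hwd_le ω p₀
  by_cases hxy : x = y
  · subst hxy
    simp only [SimpleGraph.dist_self, Nat.cast_zero, mul_zero]
    exact integral_nonneg hwd_nonneg
  set d : ℕ := G.dist x y with hddef
  have hd0 : 0 ≤ (d:ℝ) := Nat.cast_nonneg d
  by_cases hDd : D ≤ d
  · -- large distance branch
    set A : Set Ω := {ω | wdist G (W ω) x y < ε * d} with hAdef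
    have hAmeas : MeasurableSet A := hwd_meas measurableSet_Iio
    -- per-path Chernoff bound
    have hmgf_edge : ∀ e : G.edgeSet, mgf (fun ω => W ω (e : Sym2 V)) μ (-t) = ρN := by
      intro e
      have hmap := integral_map (μ := μ) (φ := fun ω => W ω (e : Sym2 V))
        (hmeas (e : Sym2 V)).aemeasurable
        (f := fun z => Real.exp (-(t * z)))
        ((Real.continuous_exp.comp (continuous_const.mul continuous_id).neg).aestronglyMeasurable)
      rw [hlaw e] at hmap
      have hgoal : mgf (fun ω => W ω (e : Sym2 V)) μ (-t)
          = ∫ ω, Real.exp (-(t * W ω (e : Sym2 V))) ∂μ := by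
        simp only [mgf, neg_mul]
      rw [hgoal, ← hmap, hρNdef, hρdef]
    have key : ∀ p : G.Walk x y, p.IsPath → d ≤ p.length →
        μ {ω | (p.edges.map (W ω)).sum ≤ ε * d} ≤
          ENNReal.ofReal ((Real.exp (t * ε) * ρN) ^ p.length) := by
      intro p hp hdp
      obtain ⟨s, hscard, hssum⟩ := aux_finset_of_list (P := (· ∈ G.edgeSet)) p.edges
        (fun e he => p.edges_subset_edgeSet he) hp.edges_nodup
      have h := aux_chernoff μ (fun (e : G.edgeSet) ω => W ω (e : Sym2 V)) hindep
        (fun i => hmeas _) (fun i ω => hpos ω _) t ht0 ρN hmgf_edge s (ε * d)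
      rw [hscard, SimpleGraph.Walk.length_edges] at h
      have hsetEq : {ω | ∑ i ∈ s, W ω (i : Sym2 V) ≤ ε * (d:ℝ)}
          = {ω | (p.edges.map (W ω)).sum ≤ ε * d} := by
        ext ω
        rw [Set.mem_setOf_eq, Set.mem_setOf_eq, hssum (W ω)]
      rw [hsetEq] at h
      have hexp : Real.exp (t * (ε * d)) * ρN ^ p.length
          ≤ (Real.exp (t * ε) * ρN) ^ p.length := by
        rw [mul_pow, ← Real.exp_nat_mul]
        apply mul_le_mul_of_nonneg_right _ (pow_nonneg hρN0 _)
        apply Real.exp_le_exp.mpr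
        have hdn : (d:ℝ) ≤ (p.length:ℝ) := Nat.cast_le.mpr hdp
        nlinarith [mul_nonneg ht0 hεpos.le]
      rw [← ENNReal.ofReal_toReal (measure_ne_top μ _)]
      exact ENNReal.ofReal_le_ofReal (le_trans h hexp)
    -- union bound
    have hcover : A ⊆ ⋃ (m : ℕ), ⋃ (p : {p : G.Walk x y // p.IsPath ∧ p.length = m + d}),
        {ω | ((p : G.Walk x y).edges.map (W ω)).sum ≤ ε * d} := by
      intro ω hω
      have hω' : (⨅ p : G.Walk x y, (p.edges.map (W ω)).sum) < ε * d := hω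
      obtain ⟨w, hw⟩ := exists_lt_of_ciInf_lt hω'
      have hsum : ((w.bypass.edges.map (W ω)).sum ≤ (w.edges.map (W ω)).sum) := by
        calc (w.bypass.edges.map (W ω)).sum
            = w.bypass.edges.toFinset.sum (W ω) :=
              (List.sum_toFinset _ w.bypass_isPath.edges_nodup).symm
          _ ≤ w.edges.toFinset.sum (W ω) := by
              apply Finset.sum_le_sum_of_subset_of_nonneg
              · intro e he
                rw [List.mem_toFinset] at he ⊢
                exact w.edges_bypass_subset he
              · intro e _ _
                exact hpos ω e
          _ = (w.edges.dedup.map (W ω)).sum := by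
              rw [← List.sum_toFinset _ (List.nodup_dedup _)]
              congr 1
              ext e
              simp
          _ ≤ (w.edges.map (W ω)).sum := by
              apply List.Sublist.sum_le_sum ((w.edges.dedup_sublist).map _)
              intro a ha
              obtain ⟨e, _, rfl⟩ := List.mem_map.mp ha
              exact hpos ω e
      have hlen : d ≤ w.bypass.length := SimpleGraph.dist_le w.bypass
      refine Set.mem_iUnion.mpr ⟨w.bypass.length - d, Set.mem_iUnion.mpr
        ⟨⟨w.bypass, w.bypass_isPath, by omega⟩, ?_⟩⟩
      exact le_of_lt (lt_of_le_of_lt hsum hw)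
    have hμstep : ∀ m : ℕ,
        μ (⋃ (p : {p : G.Walk x y // p.IsPath ∧ p.length = m + d}),
          {ω | ((p : G.Walk x y).edges.map (W ω)).sum ≤ ε * d})
        ≤ ENNReal.ofReal (r ^ (m + d)) := by
      intro m
      set n : ℕ := m + d with hn
      have hcount : Fintype.card {p : G.Walk x y // p.IsPath ∧ p.length = n} ≤ q ^ n := by
        have hinj : Function.Injective
            (fun p : {p : G.Walk x y // p.IsPath ∧ p.length = n} =>
              (⟨p.1, p.2.2⟩ : {p : G.Walk x y // p.length = n})) := by
          rintro ⟨p, hp⟩ ⟨p', hp'⟩ h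
          simpa using congrArg Subtype.val h
        refine le_trans (Fintype.card_le_of_injective _ hinj) ?_
        rw [Fintype.card_of_subtype (G.finsetWalkLength n x y)
          (fun _ => SimpleGraph.mem_finsetWalkLength_iff)]
        exact aux_card_walkLength G q hdeg' n x y
      calc μ (⋃ (p : {p : G.Walk x y // p.IsPath ∧ p.length = n}),
            {ω | ((p : G.Walk x y).edges.map (W ω)).sum ≤ ε * d})
          ≤ ∑' (p : {p : G.Walk x y // p.IsPath ∧ p.length = n}),
            μ {ω | ((p : G.Walk x y).edges.map (W ω)).sum ≤ ε * d} := measure_iUnion_le _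
        _ = ∑ p : {p : G.Walk x y // p.IsPath ∧ p.length = n},
            μ {ω | ((p : G.Walk x y).edges.map (W ω)).sum ≤ ε * d} := tsum_fintype _
        _ ≤ Fintype.card {p : G.Walk x y // p.IsPath ∧ p.length = n} •
            ENNReal.ofReal ((Real.exp (t * ε) * ρN) ^ n) := by
            rw [← Finset.card_univ]
            apply Finset.sum_le_card_nsmul
            intro p _
            have h1 := key p.1 p.2.1 (by omega)
            rwa [p.2.2] at h1
        _ ≤ (q ^ n : ℕ) • ENNReal.ofReal ((Real.exp (t * ε) * ρN) ^ n) := by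
            exact nsmul_le_nsmul_left zero_le hcount
        _ = ENNReal.ofReal (r ^ n) := by
            rw [nsmul_eq_mul, hrdef, mul_pow]
            rw [← ENNReal.ofReal_natCast (q ^ n), ← ENNReal.ofReal_mul (by positivity)]
            congr 1
            push_cast
            ring
    have hsummable : Summable fun m : ℕ => r ^ (m + d) := by
      simp_rw [pow_add]
      exact (summable_geometric_of_lt_one hr0 hr1).mul_right _
    have hgeom : (∑' m : ℕ, r ^ (m + d)) = r ^ d * (1 - r)⁻¹ := by
      have h1 : ∀ m : ℕ, r ^ (m + d) = r ^ m * r ^ d := fun m => pow_add r m d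
      rw [tsum_congr h1, tsum_mul_right, tsum_geometric_of_lt_one hr0 hr1]
      ring
    have hμA : μ A ≤ ENNReal.ofReal (r ^ d * (1 - r)⁻¹) := by
      calc μ A ≤ μ (⋃ (m : ℕ), ⋃ (p : {p : G.Walk x y // p.IsPath ∧ p.length = m + d}),
            {ω | ((p : G.Walk x y).edges.map (W ω)).sum ≤ ε * d}) := measure_mono hcover
        _ ≤ ∑' (m : ℕ), μ (⋃ (p : {p : G.Walk x y // p.IsPath ∧ p.length = m + d}),
            {ω | ((p : G.Walk x y).edges.map (W ω)).sum ≤ ε * d}) := measure_iUnion_le _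
        _ ≤ ∑' (m : ℕ), ENNReal.ofReal (r ^ (m + d)) := ENNReal.tsum_le_tsum hμstep
        _ = ENNReal.ofReal (∑' m : ℕ, r ^ (m + d)) :=
            (ENNReal.ofReal_tsum_of_nonneg (fun m => pow_nonneg hr0 _) hsummable).symm
        _ = ENNReal.ofReal (r ^ d * (1 - r)⁻¹) := by rw [hgeom]
    have hA2 : (μ A).toReal ≤ 1/2 := by
      have h3 : (0:ℝ) < 1 - r := by linarith
      have h1 := ENNReal.toReal_le_of_le_ofReal
        (mul_nonneg (pow_nonneg hr0 _) (by positivity)) hμA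
      have h2 : r ^ d * (1 - r)⁻¹ ≤ 1/2 := by
        have hrd : r ^ d ≤ r ^ D := pow_le_pow_of_le_one hr0 hr1.le hDd
        calc r ^ d * (1 - r)⁻¹ ≤ ((1 - r)/2) * (1 - r)⁻¹ := by
              apply mul_le_mul_of_nonneg_right (le_trans hrd hDbound) (by positivity)
          _ = 1/2 := by
              field_simp
      linarith
    have hind_le : ∀ ω, Aᶜ.indicator (fun _ => ε * (d:ℝ)) ω ≤ wdist G (W ω) x y := by
      intro ω
      by_cases h : ω ∈ Aᶜ
      · rw [Set.indicator_of_mem h]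
        exact not_lt.mp h
      · rw [Set.indicator_of_notMem h]
        exact hwd_nonneg ω
    have hint_ind : Integrable (Aᶜ.indicator fun _ => ε * (d:ℝ)) μ :=
      (integrable_const _).indicator hAmeas.compl
    have hIA := integral_mono hint_ind hwd_int hind_le
    rw [integral_indicator_const _ hAmeas.compl] at hIA
    have hcompl : (μ Aᶜ).toReal = 1 - (μ A).toReal := by
      rw [prob_compl_eq_one_sub hAmeas,
        ENNReal.toReal_sub_of_le prob_le_one ENNReal.one_ne_top, ENNReal.toReal_one]
    calc a'' * d ≤ (ε/2) * d := mul_le_mul_of_nonneg_right (min_le_left _ _) hd0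
      _ ≤ (μ Aᶜ).toReal * (ε * d) := by
          rw [hcompl]
          nlinarith [mul_nonneg hεpos.le hd0]
      _ ≤ ∫ ω, wdist G (W ω) x y ∂μ := by
          rw [smul_eq_mul] at hIA
          exact hIA
  · -- small distance branch
    push_neg at hDd
    set F : Finset V := (hfin x).toFinset with hFdef
    have hFmem : ∀ v, v ∈ F ↔ G.Adj x v := by
      intro v
      rw [hFdef, Set.Finite.mem_toFinset]
      rfl
    set B : Set Ω := {ω | ∀ v ∈ F, δ ≤ W ω s(x, v)} with hBdef
    have hBmeas : MeasurableSet B := by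
      have hBeq : B = ⋂ v ∈ F, {ω | δ ≤ W ω s(x, v)} := by
        ext ω
        simp [hBdef, Set.mem_iInter]
      rw [hBeq]
      exact MeasurableSet.biInter F.countable_toSet
        (fun v _ => (hmeas s(x, v)) measurableSet_Ici)
    have hBwd : ∀ ω ∈ B, δ ≤ wdist G (W ω) x y := by
      intro ω hω
      refine le_ciInf fun p => ?_
      cases p with
      | nil => exact absurd rfl hxy
      | @cons _ b _ hadj pb =>
          rw [SimpleGraph.Walk.edges_cons, List.map_cons, List.sum_cons]
          have hb : b ∈ F := (hFmem b).mpr hadj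
          have h1 := hω b hb
          have h2 := hsum_nonneg ω pb.edges
          linarith
    have hFcard : F.card ≤ q := by
      have h1 : (F : Set V) = G.neighborSet x := (hfin x).coe_toFinset
      calc F.card = (F : Set V).ncard := (Set.ncard_coe_finset F).symm
        _ = (G.neighborSet x).ncard := by rw [h1]
        _ ≤ q := hdeg x
    have hBc : μ Bᶜ ≤ (q:ENNReal) * ν (Set.Iio δ) := by
      have hBc_sub : Bᶜ ⊆ ⋃ v ∈ F, {ω | W ω s(x, v) < δ} := by
        intro ω hω
        simp only [hBdef, Set.mem_compl_iff, Set.mem_setOf_eq, not_forall, not_le] at hω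
        obtain ⟨v, hv, hlt⟩ := hω
        exact Set.mem_biUnion hv hlt
      calc μ Bᶜ ≤ μ (⋃ v ∈ F, {ω | W ω s(x, v) < δ}) := measure_mono hBc_sub
        _ ≤ ∑ v ∈ F, μ {ω | W ω s(x, v) < δ} := measure_biUnion_finset_le _ _
        _ = ∑ v ∈ F, ν (Set.Iio δ) := by
            apply Finset.sum_congr rfl
            intro v hv
            have he : s(x, v) ∈ G.edgeSet := by
              rw [SimpleGraph.mem_edgeSet]
              exact (hFmem v).mp hv
            have h2 := hlaw ⟨s(x, v), he⟩
            have h3 : {ω | W ω s(x, v) < δ} = (fun ω => W ω s(x, v)) ⁻¹' (Set.Iio δ) := rfl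
            rw [h3, ← Measure.map_apply (hmeas s(x, v)) measurableSet_Iio, h2]
        _ = (F.card : ENNReal) * ν (Set.Iio δ) := by
            rw [Finset.sum_const, nsmul_eq_mul]
        _ ≤ (q:ENNReal) * ν (Set.Iio δ) := by
            apply mul_le_mul_left
            exact_mod_cast Nat.cast_le.mpr hFcard
    have hBcr : (μ Bᶜ).toReal ≤ (q:ℝ) * νδ := by
      have h1 : ((q:ENNReal) * ν (Set.Iio δ)).toReal = (q:ℝ) * νδ := by
        rw [ENNReal.toReal_mul]
        simp [hνδdef]
      rw [← h1]
      exact ENNReal.toReal_mono (by finiteness) hBc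
    have hBr : κ ≤ (μ B).toReal := by
      have h1 : μ Bᶜ = 1 - μ B := prob_compl_eq_one_sub hBmeas
      have h2 : (μ Bᶜ).toReal = 1 - (μ B).toReal := by
        rw [h1, ENNReal.toReal_sub_of_le prob_le_one ENNReal.one_ne_top]
        simp
      rw [hκdef]
      have h3 := hBcr
      rw [h2] at h3
      linarith
    have hind_le : ∀ ω, B.indicator (fun _ => δ) ω ≤ wdist G (W ω) x y := by
      intro ω
      by_cases h : ω ∈ B
      · rw [Set.indicator_of_mem h]
        exact hBwd ω h
      · rw [Set.indicator_of_notMem h]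
        exact hwd_nonneg ω
    have hint_ind : Integrable (B.indicator fun _ => δ) μ :=
      (integrable_const δ).indicator hBmeas
    have hIB := integral_mono hint_ind hwd_int hind_le
    rw [integral_indicator_const _ hBmeas] at hIB
    have hIB' : δ * κ ≤ ∫ ω, wdist G (W ω) x y ∂μ := by
      refine le_trans ?_ hIB
      rw [smul_eq_mul, mul_comm δ κ]
      exact mul_le_mul_of_nonneg_right hBr hδpos.le
    calc a'' * d ≤ (δ * κ / D) * d := by
          apply mul_le_mul_of_nonneg_right (min_le_right _ _) hd0
      _ ≤ δ * κ := by
          have hDpos : (0:ℝ) < (D:ℝ) := by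
            have : 0 < D := Nat.lt_of_lt_of_le Nat.zero_lt_one hD1
            exact_mod_cast this
          rw [div_mul_eq_mul_div, div_le_iff₀ hDpos]
          have hdD : (d:ℝ) ≤ (D:ℝ) := Nat.cast_le.mpr hDd.le
          exact mul_le_mul_of_nonneg_left hdD (mul_nonneg hδpos.le hκpos.le)
      _ ≤ _ := hIB'
end

section
/- Let (r_k') be a sequence of reals with r_k' ≥ 1 satisfying r_k' ≥ (1/2)(r_{k-1}' − C·(r_{k-1}'·log r_{k-1}')^{1/2}) for all k ≥ 1, where r_0' = r_0 ≥ 2, and suppose 2^{-k}·r_0 ≥ α_0 for a sufficiently large constant α_0 depending on C. Then there is a constant C'' > 0 depending only on C such that r_k' ≥ α·(1 − C''·(log α / α)^{1/2}) where α = r_0/2^k. -/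
set_option maxHeartbeats 1000000

lemma sqrt_helper (a : ℝ) (ha : 0 < a) :
    a * Real.sqrt (Real.log a / a) = Real.sqrt (a * Real.log a) := by
  rw [show a * Real.log a = a ^ 2 * (Real.log a / a) by field_simp,
    Real.sqrt_mul (by positivity), Real.sqrt_sq ha.le]

/-- Let `(r'_k)` be a sequence of reals with `r'_k ≥ 1` satisfying
`r'_k ≥ (1/2)(r'_{k-1} − C√(r'_{k-1} log r'_{k-1}))` for all `k ≥ 1`, with `r'_0 = r₀ ≥ 2`.
Then there are constants `C'' > 0` and `α₀` depending only on `C` such that whenever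
`2^{-k} r₀ ≥ α₀`, one has `r'_k ≥ α (1 − C''√(log α / α))` where `α = r₀/2^k`. -/
theorem stmt16 (C : ℝ) (hC : 0 < C) :
    ∃ C'' > (0 : ℝ), ∃ α0 : ℝ, ∀ (r' : ℕ → ℝ) (r0 : ℝ), 2 ≤ r0 → r' 0 = r0 →
      (∀ k, 1 ≤ r' k) →
      (∀ k : ℕ, 1 ≤ k →
        (1 / 2) * (r' (k - 1) - C * Real.sqrt (r' (k - 1) * Real.log (r' (k - 1)))) ≤ r' k) →
      ∀ k : ℕ, α0 ≤ r0 / 2 ^ k →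
        (r0 / 2 ^ k) * (1 - C'' * Real.sqrt (Real.log (r0 / 2 ^ k) / (r0 / 2 ^ k))) ≤
          r' k := by
  refine ⟨20 * C, by positivity, 256 + 64 * C ^ 4, ?_⟩
  intro r' r0 hr0 h0 hge1 hrec k
  induction k with
  | zero =>
    intro hα
    simp only [pow_zero, div_one] at *
    rw [h0]
    nlinarith [mul_nonneg (mul_nonneg (show (0:ℝ) ≤ 20 * C by positivity)
      (Real.sqrt_nonneg (Real.log r0 / r0))) (show (0:ℝ) ≤ r0 by linarith)]
  | succ n ih =>
    intro hα
    set α := r0 / 2 ^ (n + 1) with hαdef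
    have hα256 : 256 ≤ α := by nlinarith [pow_pos hC 4]
    have hαpos : (0 : ℝ) < α := by linarith
    have h2 : r0 / 2 ^ n = 2 * α := by
      rw [hαdef, pow_succ]; field_simp
    have ih' : 2 * α - 20 * C * Real.sqrt (2 * α * Real.log (2 * α)) ≤ r' n := by
      have := ih (by rw [h2]; nlinarith)
      rw [h2] at this
      have heq := sqrt_helper (2 * α) (by linarith)
      nlinarith [this, Real.sqrt_nonneg (Real.log (2 * α) / (2 * α))]
    set x := r' n with hxdef
    have hx1 : (1 : ℝ) ≤ x := hge1 n
    have hlogx : 0 ≤ Real.log x := Real.log_nonneg hx1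
    have hlogα : 0 ≤ Real.log α := Real.log_nonneg (by linarith)
    set w := Real.sqrt (α * Real.log α) with hwdef
    have hw0 : 0 ≤ w := Real.sqrt_nonneg _
    have hw2 : w ^ 2 = α * Real.log α := Real.sq_sqrt (by positivity)
    -- log(4α) ≤ (3/2) log α
    have hlog4 : Real.log (4 * α) ≤ 3 / 2 * Real.log α := by
      have h16 : Real.log 16 ≤ Real.log α :=
        Real.log_le_log (by norm_num) (by linarith)
      have h4 : Real.log (4 * α) = Real.log 4 + Real.log α :=
        Real.log_mul (by norm_num) (by positivity)
      have h164 : Real.log 16 = 2 * Real.log 4 := by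
        rw [show (16 : ℝ) = 4 ^ 2 by norm_num, Real.log_pow]; push_cast; ring
      linarith
    have hlog2 : Real.log (2 * α) ≤ Real.log (4 * α) :=
      Real.log_le_log (by linarith) (by linarith)
    have hlog2n : 0 ≤ Real.log (2 * α) := Real.log_nonneg (by linarith)
    -- √(2α log 2α) ≤ √3 w
    have hs3 : Real.sqrt (2 * α * Real.log (2 * α)) ≤ Real.sqrt 3 * w := by
      rw [hwdef, ← Real.sqrt_mul (by norm_num)]
      apply Real.sqrt_le_sqrt
      nlinarith
    have h3le : Real.sqrt 3 ≤ 7 / 4 := by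
      nlinarith [Real.sq_sqrt (by norm_num : (0:ℝ) ≤ 3), Real.sqrt_nonneg 3]
    have h6le : Real.sqrt 6 ≤ 5 / 2 := by
      nlinarith [Real.sq_sqrt (by norm_num : (0:ℝ) ≤ 6), Real.sqrt_nonneg 6]
    have hs3n := Real.sqrt_nonneg 3
    have hs6n := Real.sqrt_nonneg 6
    -- goal rewriting
    have hgoal_eq : α * (1 - 20 * C * Real.sqrt (Real.log α / α)) = α - 20 * C * w := by
      rw [hwdef, ← sqrt_helper α hαpos]; ring
    rw [hgoal_eq]
    -- recursion at k = n+1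
    have hrk := hrec (n + 1) (by omega)
    simp only [Nat.add_sub_cancel] at hrk
    rw [← hxdef] at hrk
    have hsxl : 0 ≤ Real.sqrt (x * Real.log x) := Real.sqrt_nonneg _
    suffices h : 2 * α - 40 * C * w ≤ x - C * Real.sqrt (x * Real.log x) by linarith
    rcases le_or_gt x (4 * α) with hcase | hcase
    · -- moderate case
      have hs6 : Real.sqrt (x * Real.log x) ≤ Real.sqrt 6 * w := by
        rw [hwdef, ← Real.sqrt_mul (by norm_num)]
        apply Real.sqrt_le_sqrt
        have hlx : Real.log x ≤ Real.log (4 * α) :=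
          Real.log_le_log (by linarith) (by linarith)
        nlinarith
      have f6 : C * Real.sqrt (x * Real.log x) ≤ C * (5 / 2 * w) :=
        mul_le_mul_of_nonneg_left (hs6.trans (mul_le_mul_of_nonneg_right h6le hw0)) hC.le
      have f3 : C * Real.sqrt (2 * α * Real.log (2 * α)) ≤ C * (7 / 4 * w) :=
        mul_le_mul_of_nonneg_left (hs3.trans (mul_le_mul_of_nonneg_right h3le hw0)) hC.le
      have hCw : 0 ≤ C * w := mul_nonneg hC.le hw0
      linarith
    · -- large case : x > 4α ≥ 64 C^4 + ...
      have hx64 : 64 * C ^ 4 ≤ x := by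
        have : (0:ℝ) < C ^ 4 := pow_pos hC 4
        linarith
      have hsx : 8 * C ^ 2 ≤ Real.sqrt x := by
        rw [show (8 * C ^ 2 : ℝ) = Real.sqrt ((8 * C ^ 2) ^ 2) from
          (Real.sqrt_sq (by positivity)).symm]
        apply Real.sqrt_le_sqrt
        linarith
      have hxpos : (0 : ℝ) < x := by linarith
      have hsxpos : 0 < Real.sqrt x := Real.sqrt_pos.mpr hxpos
      have hmul : Real.sqrt x * Real.sqrt x = x := Real.mul_self_sqrt hxpos.le
      have hlogle : Real.log x ≤ 2 * Real.sqrt x := by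
        have h1 : Real.log (Real.sqrt x) = Real.log x / 2 := Real.log_sqrt hxpos.le
        have h2 : Real.log (Real.sqrt x) ≤ Real.sqrt x - 1 :=
          Real.log_le_sub_one_of_pos hsxpos
        linarith
      have hcx : 8 * C ^ 2 * Real.sqrt x ≤ x := by
        have h3 := mul_le_mul_of_nonneg_right hsx hsxpos.le
        rw [hmul] at h3
        linarith
      have hlx2 : 4 * C ^ 2 * Real.log x ≤ x := by
        have h4 := mul_le_mul_of_nonneg_left hlogle (show (0:ℝ) ≤ 4 * C ^ 2 by positivity)
        linarith
      have hCx : C * Real.sqrt (x * Real.log x) ≤ x / 2 := by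
        have hle : Real.sqrt (x * Real.log x) ≤ x / (2 * C) := by
          rw [show x / (2 * C) = Real.sqrt ((x / (2 * C)) ^ 2) from
            (Real.sqrt_sq (by positivity)).symm]
          apply Real.sqrt_le_sqrt
          rw [div_pow]
          rw [le_div_iff₀ (by positivity)]
          have h5 := mul_le_mul_of_nonneg_left hlx2 hxpos.le
          nlinarith [h5]
        calc C * Real.sqrt (x * Real.log x) ≤ C * (x / (2 * C)) := by
              exact mul_le_mul_of_nonneg_left hle hC.le
          _ = x / 2 := by field_simp
      linarith [hCx, mul_nonneg hC.le hw0]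
end
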